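/- arXiv:2603.00664 — 9 statements merged into one kernel-verified Lean document; each statement's English description precedes it below -/
import Mathlib

section
/- A hypergraph H admits a transversal coalition partition if and only if there is no edge e of H with e ≠ V(H) such that e is a subset of every edge of H. -/
open Finset

/-- A set `T` is a transversal of the hypergraph with edge family `E`
if it meets every edge. -/
def IsTransversal {α : Type*} [DecidableEq α] (E : Set (Finset α)) (T : Finset α) : Prop :=
  ∀ e ∈ E, (T ∩ e).Nonempty

/-- A transversal coalition partition of the vertex set `U` of a hypergraph with
edge family `E`: a partition of `U` into nonempty parts, each of which is either a
singleton transversal, or a non-transversal part forming a transversal coalition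
with another (non-transversal) part. -/
def IsTrcPartition {α : Type*} [DecidableEq α] (U : Finset α) (E : Set (Finset α))
    (P : Finset (Finset α)) : Prop :=
  (∀ p ∈ P, p.Nonempty) ∧
  (∀ p ∈ P, ∀ q ∈ P, p ≠ q → Disjoint p q) ∧
  P.biUnion id = U ∧
  ∀ p ∈ P, (∃ v, p = {v} ∧ IsTransversal E p) ∨
    (¬ IsTransversal E p ∧
      ∃ q ∈ P, q ≠ p ∧ ¬ IsTransversal E q ∧ IsTransversal E (p ∪ q))

/-- `TrcNumberIs U E k` says that the transversal coalition number of the hypergraph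
`(U, E)` equals `k`, i.e. `k` is the maximum number of parts of a transversal
coalition partition. -/
def TrcNumberIs {α : Type*} [DecidableEq α] (U : Finset α) (E : Set (Finset α)) (k : ℕ) : Prop :=
  IsGreatest {m | ∃ P : Finset (Finset α), IsTrcPartition U E P ∧ P.card = m} k

lemma notTrans {α : Type*} [DecidableEq α] {E : Set (Finset α)} {p g : Finset α}
    (hg : g ∈ E) (h0 : p ∩ g = ∅) : ¬ IsTransversal E p := fun htr => by
  have := htr g hg
  rw [h0] at this
  exact Finset.not_nonempty_empty this

lemma core {α : Type*} [DecidableEq α] (E : Set (Finset α)) :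
    ∀ (n : ℕ) (R : Finset α), R.card ≤ n →
    (∀ e ∈ E, (e ∩ R).Nonempty) → (∀ v ∈ R, ∃ e ∈ E, v ∉ e) →
    ∃ Q : Finset (Finset α),
      (∀ p ∈ Q, p.Nonempty) ∧
      (∀ p ∈ Q, ∀ q ∈ Q, p ≠ q → Disjoint p q) ∧
      Q.biUnion id = R ∧
      ∀ p ∈ Q, ¬ IsTransversal E p ∧
        ∃ q ∈ Q, q ≠ p ∧ ¬ IsTransversal E q ∧ IsTransversal E (p ∪ q) := by
  classical
  intro n
  induction n with
  | zero =>
    intro R hcard _ _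
    have : R = ∅ := card_eq_zero.mp (Nat.le_zero.mp hcard)
    subst this
    exact ⟨∅, by simp, by simp, by simp, by simp⟩
  | succ n ih =>
    intro R hcard h1 h2
    by_cases hRe : R = ∅
    · subst hRe; exact ⟨∅, by simp, by simp, by simp, by simp⟩
    have hRne : R.Nonempty := nonempty_iff_ne_empty.mpr hRe
    have hRtr : IsTransversal E R := fun e he => by
      obtain ⟨v, hv⟩ := h1 e he
      rw [mem_inter] at hv
      exact ⟨v, mem_inter.mpr ⟨hv.2, hv.1⟩⟩
    obtain ⟨T, hTmem, hTmin⟩ := Finset.exists_min_image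
      (R.powerset.filter (fun t => IsTransversal E t)) card
      ⟨R, by simp [hRtr]⟩
    rw [mem_filter, mem_powerset] at hTmem
    obtain ⟨hTR, hTtr⟩ := hTmem
    have hTne : T.Nonempty := by
      obtain ⟨v, hv⟩ := hRne
      obtain ⟨e, he, _⟩ := h2 v hv
      obtain ⟨w, hw⟩ := hTtr e he
      exact ⟨w, (mem_inter.mp hw).1⟩
    have hmin : ∀ x ∈ T, ∃ g ∈ E, T.erase x ∩ g = ∅ := by
      intro x hx
      have hlt : (T.erase x).card < T.card := card_erase_lt_of_mem hx
      have hnt : ¬ IsTransversal E (T.erase x) := by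
        intro htr
        have : T.card ≤ (T.erase x).card := by
          apply hTmin
          rw [mem_filter, mem_powerset]
          exact ⟨(erase_subset x T).trans hTR, htr⟩
        omega
      by_contra hc
      push_neg at hc
      exact hnt fun e he => hc e he
    have hT2 : 1 < T.card := by
      rcases Nat.lt_or_ge 1 T.card with h | h
      · exact h
      · exfalso
        have h1c : T.card = 1 := le_antisymm h (card_pos.mpr hTne)
        obtain ⟨t, ht⟩ := card_eq_one.mp h1c
        subst ht
        obtain ⟨e, he, hte⟩ := h2 t (hTR (mem_singleton_self t))
        obtain ⟨w, hw⟩ := hTtr e he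
        rw [mem_inter, mem_singleton] at hw
        exact hte (hw.1 ▸ hw.2)
    obtain ⟨x, hxT, y, hyT, hxy⟩ := one_lt_card.mp hT2
    obtain ⟨gx, hgxE, hgx⟩ := hmin x hxT
    obtain ⟨gy, hgyE, hgy⟩ := hmin y hyT
    have hxnot : ({x} : Finset α) ∩ gy = ∅ := by
      rw [eq_empty_iff_forall_notMem]
      intro v hv
      rw [mem_inter, mem_singleton] at hv
      have : v ∈ T.erase y ∩ gy :=
        mem_inter.mpr ⟨mem_erase.mpr ⟨hv.1 ▸ hxy, hv.1 ▸ hxT⟩, hv.2⟩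
      rw [hgy] at this; exact notMem_empty v this
    have hAnt : ¬ IsTransversal E ({x} : Finset α) := notTrans hgyE hxnot
    have hBnt : ¬ IsTransversal E (T.erase x) := notTrans hgxE hgx
    have hBne : (T.erase x).Nonempty := ⟨y, mem_erase.mpr ⟨Ne.symm hxy, hyT⟩⟩
    have hunionT : ({x} : Finset α) ∪ T.erase x = T := by
      rw [← insert_eq, insert_erase hxT]
    have hxB : ({x} : Finset α) ≠ T.erase x := by
      intro h
      have : x ∈ T.erase x := h ▸ mem_singleton_self x
      exact (mem_erase.mp this).1 rfl
    have hxBdisj : Disjoint ({x} : Finset α) (T.erase x) := by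
      rw [disjoint_left]
      intro v hv hv2
      rw [mem_singleton] at hv
      exact (mem_erase.mp hv2).1 (hv ▸ rfl)
    by_cases hM1 : ∃ g ∈ E, ∃ z ∈ T, g ∩ R ⊆ T ∧ z ∉ g
    · obtain ⟨g, hgE, z, hzT, hgR, hzg⟩ := hM1
      obtain ⟨gz, hgzE, hgz⟩ := hmin z hzT
      obtain ⟨w, hwT, hwz⟩ := Set.Nontrivial.exists_ne (one_lt_card_iff_nontrivial.mp hT2) z
      set A := T.erase z with hA
      set B := (R \ T) ∪ {z} with hB
      have hzB : z ∈ B := by rw [hB]; exact mem_union_right _ (mem_singleton_self z)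
      have hABdisj : Disjoint A B := by
        rw [disjoint_left]
        intro v hv hvB
        rw [hA, mem_erase] at hv
        rw [hB, mem_union, mem_sdiff, mem_singleton] at hvB
        rcases hvB with ⟨_, hvnT⟩ | rfl
        · exact hvnT hv.2
        · exact hv.1 rfl
      have hABun : A ∪ B = R := by
        ext v
        rw [hA, hB]
        simp only [mem_union, mem_erase, mem_sdiff, mem_singleton]
        constructor
        · rintro (⟨_, hv⟩ | ⟨hv, _⟩ | rfl)
          · exact hTR hv
          · exact hv
          · exact hTR hzT
        · intro hv
          by_cases hvT : v ∈ T
          · by_cases hvz : v = z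
            · right; right; exact hvz
            · left; exact ⟨hvz, hvT⟩
          · right; left; exact ⟨hv, hvT⟩
      have hBg : B ∩ g = ∅ := by
        rw [eq_empty_iff_forall_notMem]
        intro v hv
        rw [mem_inter, hB, mem_union, mem_sdiff, mem_singleton] at hv
        rcases hv with ⟨⟨hvR, hvnT⟩ | rfl, hvg⟩
        · exact hvnT (hgR (mem_inter.mpr ⟨hvg, hvR⟩))
        · exact hzg hvg
      have hAne : A.Nonempty := ⟨w, mem_erase.mpr ⟨hwz, hwT⟩⟩
      have hBne' : B.Nonempty := ⟨z, hzB⟩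
      have hAnt' : ¬ IsTransversal E A := notTrans hgzE hgz
      have hBnt' : ¬ IsTransversal E B := notTrans hgE hBg
      have hAB : A ≠ B := by
        intro h
        have : z ∈ A := h ▸ hzB
        exact (mem_erase.mp this).1 rfl
      have hTrAB : IsTransversal E (A ∪ B) := by rw [hABun]; exact hRtr
      refine ⟨insert A {B}, ?_, ?_, ?_, ?_⟩
      · intro p hp
        rcases mem_insert.mp hp with rfl | hp
        · exact hAne
        · rw [mem_singleton.mp hp]; exact hBne'
      · intro p hp q hq hpq
        rcases mem_insert.mp hp with rfl | hp
        · rcases mem_insert.mp hq with rfl | hq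
          · exact absurd rfl hpq
          · rw [mem_singleton.mp hq]; exact hABdisj
        · rcases mem_insert.mp hq with rfl | hq
          · rw [mem_singleton.mp hp]; exact hABdisj.symm
          · rw [mem_singleton.mp hp, mem_singleton.mp hq] at hpq
            exact absurd rfl hpq
      · rw [show (insert A ({B} : Finset (Finset α))).biUnion id = A ∪ B by simp]
        exact hABun
      · intro p hp
        rcases mem_insert.mp hp with rfl | hp
        · exact ⟨hAnt', B, mem_insert_of_mem (mem_singleton_self B), Ne.symm hAB, hBnt', hTrAB⟩
        · rw [mem_singleton.mp hp]
          refine ⟨hBnt', A, mem_insert_self A _, hAB, hAnt', ?_⟩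
          rw [union_comm]; exact hTrAB
    · push_neg at hM1
      have hkey : ∀ g ∈ E, g ∩ (R \ T) = ∅ → ∀ z ∈ T, z ∈ g := by
        intro g hg h0 z hz
        apply hM1 g hg z hz
        intro v hv
        rw [mem_inter] at hv
        by_contra hvT
        have : v ∈ g ∩ (R \ T) := mem_inter.mpr ⟨hv.1, mem_sdiff.mpr ⟨hv.2, hvT⟩⟩
        rw [h0] at this; exact notMem_empty v this
      have hTrT' : IsTransversal E (({x} : Finset α) ∪ T.erase x) := by
        rw [hunionT]; exact hTtr
      by_cases hL : R \ T = ∅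
      · have hRT : T = R := by
          apply Subset.antisymm hTR
          intro v hv
          by_contra hvT
          have : v ∈ R \ T := mem_sdiff.mpr ⟨hv, hvT⟩
          rw [hL] at this; exact notMem_empty v this
        refine ⟨insert ({x} : Finset α) {T.erase x}, ?_, ?_, ?_, ?_⟩
        · intro p hp
          rcases mem_insert.mp hp with rfl | hp
          · exact singleton_nonempty x
          · rw [mem_singleton.mp hp]; exact hBne
        · intro p hp q hq hpq
          rcases mem_insert.mp hp with rfl | hp
          · rcases mem_insert.mp hq with rfl | hq
            · exact absurd rfl hpq
            · rw [mem_singleton.mp hq]; exact hxBdisj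
          · rcases mem_insert.mp hq with rfl | hq
            · rw [mem_singleton.mp hp]; exact hxBdisj.symm
            · rw [mem_singleton.mp hp, mem_singleton.mp hq] at hpq
              exact absurd rfl hpq
        · rw [show (insert ({x} : Finset α) ({T.erase x} : Finset (Finset α))).biUnion id
              = {x} ∪ T.erase x by simp]
          rw [hunionT]; exact hRT
        · intro p hp
          rcases mem_insert.mp hp with rfl | hp
          · exact ⟨hAnt, T.erase x, mem_insert_of_mem (mem_singleton_self _),
              Ne.symm hxB, hBnt, hTrT'⟩
          · rw [mem_singleton.mp hp]
            refine ⟨hBnt, {x}, mem_insert_self _ _, hxB, hAnt, ?_⟩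
            rw [union_comm]; exact hTrT'
      · have hLne : (R \ T).Nonempty := nonempty_iff_ne_empty.mpr hL
        by_cases hW : ∃ h ∈ E, h ∩ (R \ T) = ∅
        · obtain ⟨h, hhE, hh0⟩ := hW
          have hLh : (R \ T) ∩ h = ∅ := by rw [inter_comm]; exact hh0
          have hLnt : ¬ IsTransversal E (R \ T) := notTrans hhE hLh
          have hLxtr : IsTransversal E ((R \ T) ∪ {x}) := by
            intro e he
            by_cases h0 : e ∩ (R \ T) = ∅
            · exact ⟨x, mem_inter.mpr ⟨mem_union_right _ (mem_singleton_self x),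
                hkey e he h0 x hxT⟩⟩
            · obtain ⟨v, hv⟩ := nonempty_iff_ne_empty.mpr h0
              rw [mem_inter] at hv
              exact ⟨v, mem_inter.mpr ⟨mem_union_left _ hv.2, hv.1⟩⟩
          have hxL : ({x} : Finset α) ≠ R \ T := by
            intro hh
            have : x ∈ R \ T := hh ▸ mem_singleton_self x
            exact (mem_sdiff.mp this).2 hxT
          have hBL : T.erase x ≠ R \ T := by
            intro hh
            obtain ⟨v, hv⟩ := hBne
            have : v ∈ R \ T := hh ▸ hv
            exact (mem_sdiff.mp this).2 (mem_of_mem_erase hv)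
          have hxLdisj : Disjoint ({x} : Finset α) (R \ T) := by
            rw [disjoint_left]
            intro v hv hv2
            rw [mem_singleton] at hv
            exact (mem_sdiff.mp hv2).2 (hv ▸ hxT)
          have hBLdisj : Disjoint (T.erase x) (R \ T) := by
            rw [disjoint_left]
            intro v hv hv2
            exact (mem_sdiff.mp hv2).2 (mem_of_mem_erase hv)
          refine ⟨insert ({x} : Finset α) (insert (T.erase x) {R \ T}), ?_, ?_, ?_, ?_⟩
          · intro p hp
            rcases mem_insert.mp hp with rfl | hp
            · exact singleton_nonempty x
            rcases mem_insert.mp hp with rfl | hp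
            · exact hBne
            · rw [mem_singleton.mp hp]; exact hLne
          · intro p hp q hq hpq
            rcases mem_insert.mp hp with rfl | hp
            · rcases mem_insert.mp hq with rfl | hq
              · exact absurd rfl hpq
              rcases mem_insert.mp hq with rfl | hq
              · exact hxBdisj
              · rw [mem_singleton.mp hq]; exact hxLdisj
            rcases mem_insert.mp hp with rfl | hp
            · rcases mem_insert.mp hq with rfl | hq
              · exact hxBdisj.symm
              rcases mem_insert.mp hq with rfl | hq
              · exact absurd rfl hpq
              · rw [mem_singleton.mp hq]; exact hBLdisj
            · rw [mem_singleton.mp hp]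
              rcases mem_insert.mp hq with rfl | hq
              · exact hxLdisj.symm
              rcases mem_insert.mp hq with rfl | hq
              · exact hBLdisj.symm
              · rw [mem_singleton.mp hp, mem_singleton.mp hq] at hpq
                exact absurd rfl hpq
          · rw [show (insert ({x} : Finset α) (insert (T.erase x)
                ({R \ T} : Finset (Finset α)))).biUnion id
                = {x} ∪ (T.erase x ∪ (R \ T)) by simp]
            rw [← union_assoc, hunionT, union_sdiff_of_subset hTR]
          · intro p hp
            rcases mem_insert.mp hp with rfl | hp
            · exact ⟨hAnt, T.erase x, mem_insert_of_mem (mem_insert_self _ _),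
                Ne.symm hxB, hBnt, hTrT'⟩
            rcases mem_insert.mp hp with rfl | hp
            · refine ⟨hBnt, {x}, mem_insert_self _ _, hxB, hAnt, ?_⟩
              rw [union_comm]; exact hTrT'
            · rw [mem_singleton.mp hp]
              exact ⟨hLnt, {x}, mem_insert_self _ _, hxL, hAnt, hLxtr⟩
        · push_neg at hW
          have hW' : ∀ h ∈ E, (h ∩ (R \ T)).Nonempty :=
            fun h hh => hW h hh
          have hcard' : (R \ T).card ≤ n := by
            have h1c := card_sdiff_of_subset hTR
            have h2c : 0 < T.card := card_pos.mpr hTne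
            have h3c : T.card ≤ R.card := card_le_card hTR
            omega
          obtain ⟨Q', hQ'ne, hQ'dis, hQ'un, hQ'parts⟩ :=
            ih (R \ T) hcard' hW' (fun v hv => h2 v (mem_sdiff.mp hv).1)
          have hQ'sub : ∀ q ∈ Q', q ⊆ R \ T := by
            intro q hq v hv
            rw [← hQ'un]
            exact mem_biUnion.mpr ⟨q, hq, hv⟩
          have hxQ'disj : ∀ q ∈ Q', Disjoint ({x} : Finset α) q := by
            intro q hq
            rw [disjoint_left]
            intro v hv hv2
            rw [mem_singleton] at hv
            exact (mem_sdiff.mp (hQ'sub q hq hv2)).2 (hv ▸ hxT)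
          have hBQ'disj : ∀ q ∈ Q', Disjoint (T.erase x) q := by
            intro q hq
            rw [disjoint_left]
            intro v hv hv2
            exact (mem_sdiff.mp (hQ'sub q hq hv2)).2 (mem_of_mem_erase hv)
          refine ⟨insert ({x} : Finset α) (insert (T.erase x) Q'), ?_, ?_, ?_, ?_⟩
          · intro p hp
            rcases mem_insert.mp hp with rfl | hp
            · exact singleton_nonempty x
            rcases mem_insert.mp hp with rfl | hp
            · exact hBne
            · exact hQ'ne p hp
          · intro p hp q hq hpq
            rcases mem_insert.mp hp with rfl | hp
            · rcases mem_insert.mp hq with rfl | hq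
              · exact absurd rfl hpq
              rcases mem_insert.mp hq with rfl | hq
              · exact hxBdisj
              · exact hxQ'disj q hq
            rcases mem_insert.mp hp with rfl | hp
            · rcases mem_insert.mp hq with rfl | hq
              · exact hxBdisj.symm
              rcases mem_insert.mp hq with rfl | hq
              · exact absurd rfl hpq
              · exact hBQ'disj q hq
            · rcases mem_insert.mp hq with rfl | hq
              · exact (hxQ'disj p hp).symm
              rcases mem_insert.mp hq with rfl | hq
              · exact (hBQ'disj p hp).symm
              · exact hQ'dis p hp q hq hpq
          · rw [biUnion_insert, biUnion_insert, id, id, hQ'un, ← union_assoc, hunionT,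
              union_sdiff_of_subset hTR]
          · intro p hp
            rcases mem_insert.mp hp with rfl | hp
            · exact ⟨hAnt, T.erase x, mem_insert_of_mem (mem_insert_self _ _),
                Ne.symm hxB, hBnt, hTrT'⟩
            rcases mem_insert.mp hp with rfl | hp
            · refine ⟨hBnt, {x}, mem_insert_self _ _, hxB, hAnt, ?_⟩
              rw [union_comm]; exact hTrT'
            · obtain ⟨hpnt, q, hq, hqp, hqnt, hqtr⟩ := hQ'parts p hp
              exact ⟨hpnt, q, mem_insert_of_mem (mem_insert_of_mem hq), hqp, hqnt, hqtr⟩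

theorem stmt0 {α : Type*} [DecidableEq α] (U : Finset α) (E : Set (Finset α))
    (hE : ∀ e ∈ E, e.Nonempty ∧ e ⊆ U) :
    (∃ P : Finset (Finset α), IsTrcPartition U E P) ↔
      ¬ ∃ e ∈ E, e ≠ U ∧ ∀ e' ∈ E, e ⊆ e' := by
  classical
  constructor
  · rintro ⟨P, hne, hdis, hcov, hparts⟩ ⟨e, heE, heU, hmon⟩
    have hUe : U ⊆ e := by
      rw [← hcov]
      intro v hv
      rw [mem_biUnion] at hv
      obtain ⟨p, hp, hvp⟩ := hv
      rw [id] at hvp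
      rcases hparts p hp with ⟨w, rfl, htr⟩ | ⟨hnt, q, hq, _, hqnt, hun⟩
      · obtain ⟨u, hu⟩ := htr e heE
        rw [mem_inter, mem_singleton] at hu
        rw [mem_singleton] at hvp
        rw [hvp, ← hu.1]
        exact hu.2
      · exfalso
        obtain ⟨ep, hep, hp0⟩ : ∃ ep ∈ E, p ∩ ep = ∅ := by
          by_contra hc; push_neg at hc
          exact hnt fun e' he' => hc e' he'
        obtain ⟨eq', heq, hq0⟩ : ∃ eq' ∈ E, q ∩ eq' = ∅ := by
          by_contra hc; push_neg at hc
          exact hqnt fun e' he' => hc e' he'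
        have hpe : p ∩ e = ∅ := by
          rw [eq_empty_iff_forall_notMem]
          intro w hw
          rw [mem_inter] at hw
          have : w ∈ p ∩ ep := mem_inter.mpr ⟨hw.1, hmon ep hep hw.2⟩
          rw [hp0] at this; exact notMem_empty w this
        have hqe : q ∩ e = ∅ := by
          rw [eq_empty_iff_forall_notMem]
          intro w hw
          rw [mem_inter] at hw
          have : w ∈ q ∩ eq' := mem_inter.mpr ⟨hw.1, hmon eq' heq hw.2⟩
          rw [hq0] at this; exact notMem_empty w this
        obtain ⟨w, hw⟩ := hun e heE
        rw [union_inter_distrib_right, hpe, hqe] at hw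
        simp at hw
    exact heU (Subset.antisymm (hE e heE).2 hUe)
  · intro hcond
    push_neg at hcond
    set R : Finset α := U.filter (fun v => ∃ e ∈ E, v ∉ e) with hRdef
    have hRU : R ⊆ U := filter_subset _ _
    have hSall : ∀ v ∈ U, v ∉ R → ∀ e ∈ E, v ∈ e := by
      intro v hvU hvR e he
      by_contra hve
      exact hvR (mem_filter.mpr ⟨hvU, e, he, hve⟩)
    by_cases hRe : R = ∅
    · -- every vertex of U is in every edge; singleton partition
      refine ⟨U.image (fun v => ({v} : Finset α)), ?_, ?_, ?_, ?_⟩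
      · intro p hp
        obtain ⟨v, _, rfl⟩ := mem_image.mp hp
        exact singleton_nonempty v
      · intro p hp q hq hpq
        obtain ⟨v, _, rfl⟩ := mem_image.mp hp
        obtain ⟨w, _, rfl⟩ := mem_image.mp hq
        rw [disjoint_left]
        intro u hu hu2
        rw [mem_singleton] at hu hu2
        exact hpq (by rw [hu.symm.trans hu2])
      · ext v
        rw [mem_biUnion]
        constructor
        · rintro ⟨p, hp, hvp⟩
          obtain ⟨w, hw, rfl⟩ := mem_image.mp hp
          rw [id, mem_singleton] at hvp
          exact hvp ▸ hw
        · intro hv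
          exact ⟨{v}, mem_image_of_mem _ hv, by simp⟩
      · intro p hp
        obtain ⟨v, hv, rfl⟩ := mem_image.mp hp
        left
        refine ⟨v, rfl, fun e he => ⟨v, mem_inter.mpr ⟨mem_singleton_self v, ?_⟩⟩⟩
        exact hSall v hv (hRe ▸ notMem_empty v) e he
    · have hRne : R.Nonempty := nonempty_iff_ne_empty.mpr hRe
      have h2 : ∀ v ∈ R, ∃ e ∈ E, v ∉ e := fun v hv => (mem_filter.mp hv).2
      have h1 : ∀ e ∈ E, (e ∩ R).Nonempty := by
        intro e he
        by_contra h0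
        rw [not_nonempty_iff_eq_empty] at h0
        have hesub : ∀ e' ∈ E, e ⊆ e' := by
          intro e' he' v hv
          have hvU : v ∈ U := (hE e he).2 hv
          have hvR : v ∉ R := by
            intro hvR
            have : v ∈ e ∩ R := mem_inter.mpr ⟨hv, hvR⟩
            rw [h0] at this; exact notMem_empty v this
          exact hSall v hvU hvR e' he'
        have heU : e = U := by
          by_contra hne'
          obtain ⟨e', he', hne''⟩ := hcond e he hne'
          exact hne'' (hesub e' he')
        obtain ⟨v, hv⟩ := hRne
        have : v ∈ e ∩ R := mem_inter.mpr ⟨heU ▸ hRU hv, hv⟩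
        rw [h0] at this; exact notMem_empty v this
      obtain ⟨Q, hQne, hQdis, hQun, hQparts⟩ := core E R.card R le_rfl h1 h2
      have hQsub : ∀ q ∈ Q, q ⊆ R := by
        intro q hq v hv
        rw [← hQun]
        exact mem_biUnion.mpr ⟨q, hq, hv⟩
      refine ⟨(U \ R).image (fun v => ({v} : Finset α)) ∪ Q, ?_, ?_, ?_, ?_⟩
      · intro p hp
        rcases mem_union.mp hp with hp | hp
        · obtain ⟨v, _, rfl⟩ := mem_image.mp hp
          exact singleton_nonempty v
        · exact hQne p hp
      · intro p hp q hq hpq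
        rcases mem_union.mp hp with hp | hp
        · obtain ⟨v, hv, rfl⟩ := mem_image.mp hp
          rcases mem_union.mp hq with hq | hq
          · obtain ⟨w, hw, rfl⟩ := mem_image.mp hq
            rw [disjoint_left]
            intro u hu hu2
            rw [mem_singleton] at hu hu2
            exact hpq (by rw [hu.symm.trans hu2])
          · rw [disjoint_left]
            intro u hu hu2
            rw [mem_singleton] at hu
            exact (mem_sdiff.mp hv).2 (hu ▸ hQsub q hq hu2)
        · rcases mem_union.mp hq with hq | hq
          · obtain ⟨w, hw, rfl⟩ := mem_image.mp hq
            rw [disjoint_left]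
            intro u hu hu2
            rw [mem_singleton] at hu2
            exact (mem_sdiff.mp hw).2 (hu2 ▸ hQsub p hp hu)
          · exact hQdis p hp q hq hpq
      · ext v
        rw [mem_biUnion]
        constructor
        · rintro ⟨p, hp, hvp⟩
          rw [id] at hvp
          rcases mem_union.mp hp with hp | hp
          · obtain ⟨w, hw, rfl⟩ := mem_image.mp hp
            rw [mem_singleton] at hvp
            exact hvp ▸ (mem_sdiff.mp hw).1
          · exact hRU (hQsub p hp hvp)
        · intro hv
          by_cases hvR : v ∈ R
          · have : v ∈ Q.biUnion id := hQun ▸ hvR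
            obtain ⟨p, hp, hvp⟩ := mem_biUnion.mp this
            exact ⟨p, mem_union_right _ hp, hvp⟩
          · exact ⟨{v}, mem_union_left _ (mem_image_of_mem _ (mem_sdiff.mpr ⟨hv, hvR⟩)),
              by simp⟩
      · intro p hp
        rcases mem_union.mp hp with hp | hp
        · obtain ⟨v, hv, rfl⟩ := mem_image.mp hp
          left
          refine ⟨v, rfl, fun e he => ⟨v, mem_inter.mpr ⟨mem_singleton_self v, ?_⟩⟩⟩
          exact hSall v (mem_sdiff.mp hv).1 (mem_sdiff.mp hv).2 e he
        · obtain ⟨hpnt, q, hq, hqp, hqnt, hqtr⟩ := hQparts p hp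
          exact Or.inr ⟨hpnt, q, mem_union_right _ hq, hqp, hqnt, hqtr⟩
end

section
/- Every hypergraph H with transversal number τ(H) ≥ 2 admits a transversal coalition partition. -/
open Finset

theorem stmt1 {α : Type*} [DecidableEq α] (U : Finset α) (E : Set (Finset α))
    (hE : ∀ e ∈ E, e.Nonempty ∧ e ⊆ U)
    (hτ : ∀ T : Finset α, T ⊆ U → IsTransversal E T → 2 ≤ T.card) :
    ∃ P : Finset (Finset α), IsTrcPartition U E P := by
  classical
  have hUtr : IsTransversal E U := by
    intro e he
    rw [Finset.inter_eq_right.mpr (hE e he).2]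
    exact (hE e he).1
  have hUne : U.Nonempty := by
    rcases Finset.eq_empty_or_nonempty U with h | h
    · exfalso
      have h2 := hτ U (subset_refl U) hUtr
      simp [h] at h2
    · exact h
  have hsingle : ∀ x ∈ U, ¬ IsTransversal E {x} := by
    intro x hx ht
    have := hτ {x} (by simpa using hx) ht
    simp at this
  obtain ⟨x, hx⟩ := hUne
  set S := U.powerset.filter (fun A => ¬ IsTransversal E A ∧ A.Nonempty) with hS
  have hxS : {x} ∈ S := by
    simp only [hS, Finset.mem_filter, Finset.mem_powerset]
    exact ⟨Finset.singleton_subset_iff.mpr hx, hsingle x hx, Finset.singleton_nonempty x⟩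
  obtain ⟨A, hAS, hAmax⟩ := S.exists_max_image Finset.card ⟨{x}, hxS⟩
  simp only [hS, Finset.mem_filter, Finset.mem_powerset] at hAS
  obtain ⟨hAU, hAnt, hAne⟩ := hAS
  have hmax : ∀ v ∈ U, v ∉ A → IsTransversal E (insert v A) := by
    intro v hv hvA
    by_contra h
    have hmem : insert v A ∈ S := by
      simp only [hS, Finset.mem_filter, Finset.mem_powerset]
      exact ⟨Finset.insert_subset hv hAU, h, Finset.insert_nonempty v A⟩
    have := hAmax _ hmem
    rw [Finset.card_insert_of_notMem hvA] at this
    omega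
  have hBne : (U \ A).Nonempty := by
    rcases Finset.eq_empty_or_nonempty (U \ A) with h | h
    · exfalso
      have hUA : U ⊆ A := by
        intro a ha
        by_contra ha'
        have : a ∈ U \ A := Finset.mem_sdiff.mpr ⟨ha, ha'⟩
        simp [h] at this
      have : A = U := Finset.Subset.antisymm hAU hUA
      exact hAnt (this ▸ hUtr)
    · exact h
  refine ⟨insert A ((U \ A).image fun v => ({v} : Finset α)), ?_, ?_, ?_, ?_⟩
  · -- nonempty parts
    intro p hp
    rcases Finset.mem_insert.mp hp with rfl | hp
    · exact hAne
    · obtain ⟨v, _, rfl⟩ := Finset.mem_image.mp hp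
      exact Finset.singleton_nonempty v
  · -- pairwise disjoint
    intro p hp q hq hpq
    rcases Finset.mem_insert.mp hp with rfl | hp' <;>
      rcases Finset.mem_insert.mp hq with rfl | hq'
    · exact absurd rfl hpq
    · obtain ⟨v, hv, rfl⟩ := Finset.mem_image.mp hq'
      exact Finset.disjoint_singleton_right.mpr (Finset.mem_sdiff.mp hv).2
    · obtain ⟨v, hv, rfl⟩ := Finset.mem_image.mp hp'
      exact Finset.disjoint_singleton_left.mpr (Finset.mem_sdiff.mp hv).2
    · obtain ⟨v, hv, rfl⟩ := Finset.mem_image.mp hp'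
      obtain ⟨w, hw, rfl⟩ := Finset.mem_image.mp hq'
      have : v ≠ w := by
        intro h; exact hpq (by rw [h])
      simp [Finset.disjoint_singleton, this, this.symm]
  · -- biUnion = U
    ext a
    simp only [Finset.mem_biUnion, Finset.mem_insert, Finset.mem_image, id]
    constructor
    · rintro ⟨p, hp, hap⟩
      rcases hp with rfl | ⟨v, hv, rfl⟩
      · exact hAU hap
      · have : a = v := Finset.mem_singleton.mp hap
        exact this ▸ (Finset.mem_sdiff.mp hv).1
    · intro ha
      by_cases haA : a ∈ A
      · exact ⟨A, Or.inl rfl, haA⟩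
      · exact ⟨{a}, Or.inr ⟨a, Finset.mem_sdiff.mpr ⟨ha, haA⟩, rfl⟩, Finset.mem_singleton_self a⟩
  · -- coalition condition
    intro p hp
    rcases Finset.mem_insert.mp hp with rfl | hp'
    · right
      refine ⟨hAnt, ?_⟩
      obtain ⟨v, hv⟩ := hBne
      obtain ⟨hvU, hvA⟩ := Finset.mem_sdiff.mp hv
      refine ⟨{v}, Finset.mem_insert_of_mem (Finset.mem_image.mpr ⟨v, hv, rfl⟩), ?_, hsingle v hvU, ?_⟩
      · intro h
        exact hvA (h ▸ Finset.mem_singleton_self v)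
      · rw [Finset.union_comm, ← Finset.insert_eq]
        exact hmax v hvU hvA
    · right
      obtain ⟨v, hv, rfl⟩ := Finset.mem_image.mp hp'
      obtain ⟨hvU, hvA⟩ := Finset.mem_sdiff.mp hv
      refine ⟨hsingle v hvU, A, Finset.mem_insert_self A _, ?_, hAnt, ?_⟩
      · intro h
        exact hvA (h ▸ Finset.mem_singleton_self v)
      · rw [← Finset.insert_eq]
        exact hmax v hvU hvA
end

section
/- For the complete r-uniform hypergraph K_n^r with r ≥ 3 and n > r + 1, the transversal coalition number is C_τ(K_n^r) = r + 1. -/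
open Finset

lemma trans_of_small {α : Type*} [DecidableEq α] (U : Finset α) (r : ℕ) (T : Finset α)
    (h : (U \ T).card < r) : IsTransversal {e : Finset α | e ⊆ U ∧ e.card = r} T := by
  rintro e ⟨heU, hec⟩
  by_contra hemp
  rw [not_nonempty_iff_eq_empty] at hemp
  have hsub : e ⊆ U \ T := by
    intro x hx
    refine mem_sdiff.2 ⟨heU hx, fun hxT => ?_⟩
    have : x ∈ T ∩ e := mem_inter.2 ⟨hxT, hx⟩
    simp [hemp] at this
  have := card_le_card hsub
  omega

lemma not_trans_of_big {α : Type*} [DecidableEq α] (U : Finset α) (r : ℕ) (T : Finset α)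
    (h : r ≤ (U \ T).card) :
    ¬ IsTransversal {e : Finset α | e ⊆ U ∧ e.card = r} T := by
  obtain ⟨e, he, hec⟩ := Finset.exists_subset_card_eq h
  intro htr
  obtain ⟨x, hx⟩ := htr e ⟨he.trans sdiff_subset, hec⟩
  rw [mem_inter] at hx
  have := he hx.2
  rw [mem_sdiff] at this
  exact this.2 hx.1

theorem stmt5 {α : Type*} [DecidableEq α] (U : Finset α) (n r : ℕ)
    (hU : U.card = n) (hr : 3 ≤ r) (hn : r + 1 < n) :
    TrcNumberIs U {e : Finset α | e ⊆ U ∧ e.card = r} (r + 1) := by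
  set E := {e : Finset α | e ⊆ U ∧ e.card = r} with hE
  constructor
  · -- construction
    obtain ⟨S, hSU, hScard⟩ : ∃ S ⊆ U, S.card = r :=
      Finset.exists_subset_card_eq (by omega)
    set B : Finset α := U \ S with hB
    have hBcard : B.card = n - r := by
      rw [hB, card_sdiff_of_subset hSU, hU, hScard]
    have hUB : U \ B = S := by
      rw [hB, sdiff_sdiff_right_self, inf_eq_inter, inter_eq_right.2 hSU]
    have hBE : ¬ IsTransversal E B := not_trans_of_big U r B (by rw [hUB, hScard])
    have hBne : B.Nonempty := by
      rw [← card_pos, hBcard]; omega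
    have hBne1 : ∀ v : α, B ≠ {v} := by
      intro v h
      have := congrArg Finset.card h
      rw [hBcard, card_singleton] at this
      omega
    refine ⟨insert B (S.image fun v => ({v} : Finset α)), ?_, ?_⟩
    · refine ⟨?_, ?_, ?_, ?_⟩
      · intro p hp
        rcases mem_insert.1 hp with rfl | hp
        · exact hBne
        · obtain ⟨v, _, rfl⟩ := mem_image.1 hp
          exact singleton_nonempty v
      · intro p hp q hq hpq
        rcases mem_insert.1 hp with rfl | hp
        · rcases mem_insert.1 hq with rfl | hq
          · exact absurd rfl hpq
          · obtain ⟨v, hv, rfl⟩ := mem_image.1 hq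
            simp only [disjoint_singleton_right, hB, mem_sdiff]
            tauto
        · obtain ⟨v, hv, rfl⟩ := mem_image.1 hp
          rcases mem_insert.1 hq with rfl | hq
          · simp only [disjoint_singleton_left, hB, mem_sdiff]
            tauto
          · obtain ⟨w, hw, rfl⟩ := mem_image.1 hq
            simp only [disjoint_singleton_right, mem_singleton]
            intro h; exact hpq (by rw [h])
      · ext x
        simp only [mem_biUnion, mem_insert, id_eq]
        constructor
        · rintro ⟨p, hp, hxp⟩
          rcases hp with rfl | hp
          · exact (mem_sdiff.1 hxp).1
          · obtain ⟨v, hv, rfl⟩ := mem_image.1 hp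
            rw [mem_singleton] at hxp; subst hxp; exact hSU hv
        · intro hx
          by_cases hxS : x ∈ S
          · exact ⟨{x}, Or.inr (mem_image.2 ⟨x, hxS, rfl⟩), mem_singleton_self x⟩
          · exact ⟨B, Or.inl rfl, mem_sdiff.2 ⟨hx, hxS⟩⟩
      · intro p hp
        have hSnon : S.Nonempty := by rw [← card_pos, hScard]; omega
        have hsingle : ∀ v ∈ S, ¬ IsTransversal E {v} := by
          intro v hv
          apply not_trans_of_big
          have : (U \ {v}).card = n - 1 := by
            rw [card_sdiff_of_subset (singleton_subset_iff.2 (hSU hv)), hU, card_singleton]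
          omega
        have hunion : ∀ v ∈ S, IsTransversal E (B ∪ {v}) := by
          intro v hv
          apply trans_of_small
          have hsub : U \ (B ∪ {v}) ⊆ S \ {v} := by
            intro x hx
            rw [mem_sdiff, mem_union, mem_singleton] at hx
            push_neg at hx
            rw [mem_sdiff, mem_singleton]
            refine ⟨?_, hx.2.2⟩
            by_contra hxS
            exact hx.2.1 (mem_sdiff.2 ⟨hx.1, hxS⟩)
          have := card_le_card hsub
          have : (S \ {v}).card = r - 1 := by
            rw [card_sdiff_of_subset (singleton_subset_iff.2 hv), hScard, card_singleton]
          omega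
        rcases mem_insert.1 hp with rfl | hp
        · obtain ⟨v, hv⟩ := hSnon
          refine Or.inr ⟨hBE, {v}, mem_insert_of_mem (mem_image.2 ⟨v, hv, rfl⟩),
            (hBne1 v ∘ Eq.symm), hsingle v hv, hunion v hv⟩
        · obtain ⟨v, hv, rfl⟩ := mem_image.1 hp
          refine Or.inr ⟨hsingle v hv, B, mem_insert_self _ _, hBne1 v, hBE, ?_⟩
          rw [union_comm]; exact hunion v hv
    · rw [card_insert_of_notMem, card_image_of_injective _ (fun a b h => by
        simpa using h), hScard]
      intro h
      obtain ⟨v, _, hv⟩ := mem_image.1 h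
      exact hBne1 v hv.symm
  · -- upper bound
    rintro m ⟨P, ⟨hne, hdisj, hcover, hcond⟩, rfl⟩
    rcases P.eq_empty_or_nonempty with rfl | ⟨p, hp⟩
    · simp
    rcases hcond p hp with ⟨v, rfl, htr⟩ | ⟨hptr, q, hq, hqp, hqtr, hpq⟩
    · exfalso
      refine not_trans_of_big U r {v} ?_ htr
      have : (U \ {v}).card ≥ n - 1 := by
        have : U.card - ({v} : Finset α).card ≤ (U \ {v}).card := le_card_sdiff _ _
        rw [hU, card_singleton] at this
        exact this
      omega
    · have hcard : (U \ (p ∪ q)).card < r := by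
        by_contra h
        exact absurd hpq (not_trans_of_big U r _ (by omega))
      set P' := (P.erase p).erase q with hP'
      have hP'card : P.card - 2 ≤ P'.card := by
        have h1 := card_erase_of_mem hp
        have h2 : P'.card = (P.erase p).card - 1 ∨ P'.card = (P.erase p).card := by
          by_cases hqm : q ∈ P.erase p
          · exact Or.inl (card_erase_of_mem hqm)
          · exact Or.inr (by rw [hP', erase_eq_of_notMem hqm])
        omega
      have hsub : P'.biUnion id ⊆ U \ (p ∪ q) := by
        intro x hx
        obtain ⟨s, hs, hxs⟩ := mem_biUnion.1 hx
        have hsP : s ∈ P := mem_of_mem_erase (mem_of_mem_erase hs)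
        rw [mem_sdiff, mem_union]
        refine ⟨?_, ?_⟩
        · rw [← hcover]; exact mem_biUnion.2 ⟨s, hsP, hxs⟩
        · push_neg
          constructor
          · intro hxp
            exact disjoint_left.1 (hdisj s hsP p hp (ne_of_mem_erase (mem_of_mem_erase hs))) hxs hxp
          · intro hxq
            exact disjoint_left.1 (hdisj s hsP q hq (ne_of_mem_erase hs)) hxs hxq
      have hP'le : P'.card ≤ (P'.biUnion id).card := by
        rw [card_biUnion]
        · calc P'.card = ∑ _s ∈ P', 1 := by simp
            _ ≤ ∑ s ∈ P', s.card := by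
              apply Finset.sum_le_sum
              intro s hs
              exact card_pos.2 (hne s (mem_of_mem_erase (mem_of_mem_erase hs)))
        · intro s hs t ht hst
          exact hdisj s (mem_of_mem_erase (mem_of_mem_erase hs))
            t (mem_of_mem_erase (mem_of_mem_erase ht)) hst
      have := card_le_card hsub
      omega
end

section
/- For the r-uniform star hypergraph K_{1,n}^r with n ≥ r, the transversal coalition number is C_τ(K_{1,n}^r) = r + 1. -/
open Finset

section
variable {α : Type*} [DecidableEq α]

lemma trans_of_mem_u (u : α) (L : Finset α) (r : ℕ) {T : Finset α} (hT : u ∈ T) :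
    IsTransversal {e : Finset α | ∃ S ⊆ L, S.card = r - 1 ∧ e = insert u S} T := by
  rintro e ⟨S, hS, hcard, rfl⟩
  exact ⟨u, mem_inter.2 ⟨hT, mem_insert_self u S⟩⟩

lemma not_trans (u : α) {L : Finset α} {r : ℕ} {T : Finset α}
    (huT : u ∉ T) (h : r - 1 ≤ (L \ T).card) :
    ¬ IsTransversal {e : Finset α | ∃ S ⊆ L, S.card = r - 1 ∧ e = insert u S} T := by
  intro htr
  obtain ⟨S, hS, hcard⟩ := Finset.exists_subset_card_eq h
  obtain ⟨x, hx⟩ := htr (insert u S) ⟨S, hS.trans sdiff_subset, hcard, rfl⟩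
  rw [mem_inter, mem_insert] at hx
  obtain ⟨hx1, hx2 | hx2⟩ := hx
  · exact huT (hx2 ▸ hx1)
  · exact (mem_sdiff.1 (hS hx2)).2 hx1

lemma trans_of_big (u : α) {L : Finset α} {r : ℕ} (hr : 2 ≤ r) {T : Finset α}
    (h : (L \ T).card ≤ r - 2) :
    IsTransversal {e : Finset α | ∃ S ⊆ L, S.card = r - 1 ∧ e = insert u S} T := by
  rintro e ⟨S, hS, hcard, rfl⟩
  by_contra hemp
  have hsub : S ⊆ L \ T := fun s hs => mem_sdiff.2 ⟨hS hs, fun hsT =>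
    hemp ⟨s, mem_inter.2 ⟨hsT, mem_insert_of_mem hs⟩⟩⟩
  have := card_le_card hsub
  omega

end

theorem stmt8 {α : Type*} [DecidableEq α] (u : α) (L : Finset α) (n r : ℕ)
    (hu : u ∉ L) (hL : L.card = n) (hr : 2 ≤ r) (hn : r ≤ n) :
    TrcNumberIs (insert u L)
      {e : Finset α | ∃ S ⊆ L, S.card = r - 1 ∧ e = insert u S} (r + 1) := by
  constructor
  · -- lower bound: construct a partition with r+1 parts
    obtain ⟨W, hWL, hWcard⟩ : ∃ W ⊆ L, W.card = r - 1 :=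
      Finset.exists_subset_card_eq (by omega : r - 1 ≤ L.card)
    have hWne : W.Nonempty := card_pos.1 (by omega)
    obtain ⟨w₀, hw₀⟩ := hWne
    set A : Finset α := L \ W with hA
    have hAL : A ⊆ L := sdiff_subset
    have hAcard : A.card = n - (r - 1) := by
      rw [hA, card_sdiff_of_subset hWL, hL, hWcard]
    have hAne : A.Nonempty := card_pos.1 (by omega)
    have hLA : L \ A = W := by
      rw [hA, sdiff_sdiff_right_self, inf_eq_inter, inter_eq_right.2 hWL]
    have huA : u ∉ A := fun h => hu (hAL h)
    have huW : ∀ w ∈ W, u ≠ w := fun w hw he => hu (hWL (he ▸ hw))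
    refine ⟨insert {u} (insert A (W.image fun w => ({w} : Finset α))), ?_, ?_⟩
    · refine ⟨?_, ?_, ?_, ?_⟩
      · intro p hp
        simp only [mem_insert, mem_image] at hp
        rcases hp with rfl | rfl | ⟨w, hw, rfl⟩
        · exact singleton_nonempty u
        · exact hAne
        · exact singleton_nonempty w
      · intro p hp q hq hpq
        have hdAW : ∀ w ∈ W, Disjoint A ({w} : Finset α) := fun w hw =>
          disjoint_singleton_right.2 (fun h => (mem_sdiff.1 h).2 hw)
        simp only [mem_insert, mem_image] at hp hq
        rcases hp with rfl | rfl | ⟨w, hw, rfl⟩ <;>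
          rcases hq with rfl | rfl | ⟨w', hw', rfl⟩
        · exact absurd rfl hpq
        · exact disjoint_singleton_left.2 huA
        · exact disjoint_singleton_left.2 (fun h => huW w' hw' (mem_singleton.1 h))
        · exact disjoint_singleton_right.2 huA
        · exact absurd rfl hpq
        · exact hdAW w' hw'
        · exact disjoint_singleton_right.2 (fun h => huW w hw (mem_singleton.1 h))
        · exact (hdAW w hw).symm
        · exact disjoint_singleton_left.2
            (fun h => hpq (by rw [mem_singleton.1 h]))
      · ext x
        simp only [mem_biUnion, mem_insert, mem_image, id]
        have hx := @hWL x
        constructor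
        · rintro ⟨p, hp, hxp⟩
          rcases hp with rfl | rfl | ⟨w, hw, rfl⟩
          · simp_all
          · exact Or.inr (hAL hxp)
          · simp only [mem_singleton] at hxp; exact Or.inr (hWL (hxp ▸ hw))
        · rintro (rfl | hxL)
          · exact ⟨{x}, Or.inl rfl, mem_singleton_self x⟩
          · by_cases hxW : x ∈ W
            · exact ⟨{x}, Or.inr (Or.inr ⟨x, hxW, rfl⟩), mem_singleton_self x⟩
            · exact ⟨A, Or.inr (Or.inl rfl), mem_sdiff.2 ⟨hxL, hxW⟩⟩
      · intro p hp
        simp only [mem_insert, mem_image] at hp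
        rcases hp with rfl | rfl | ⟨w, hw, rfl⟩
        · exact Or.inl ⟨u, rfl, trans_of_mem_u u L r (mem_singleton_self u)⟩
        · refine Or.inr ⟨not_trans u huA (by rw [hLA]; omega), {w₀}, ?_, ?_, ?_, ?_⟩
          · exact mem_insert_of_mem (mem_insert_of_mem (mem_image_of_mem _ hw₀))
          · intro h
            have : w₀ ∈ A := h ▸ mem_singleton_self w₀
            rw [hA, mem_sdiff] at this; exact this.2 hw₀
          · refine not_trans u (by simp [huW w₀ hw₀]) ?_
            rw [card_sdiff_of_subset (singleton_subset_iff.2 (hWL hw₀)), card_singleton, hL]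
            omega
          · refine trans_of_big u hr ?_
            have : L \ (A ∪ {w₀}) = W \ {w₀} := by
              ext x
              simp only [hA, mem_sdiff, mem_union, mem_singleton, not_or]
              have := @hWL x
              tauto
            rw [this, card_sdiff_of_subset (singleton_subset_iff.2 hw₀), card_singleton, hWcard]
            omega
        · refine Or.inr ⟨?_, A, mem_insert_of_mem (mem_insert_self _ _), ?_, ?_, ?_⟩
          · refine not_trans u (by simp [huW w hw]) ?_
            rw [card_sdiff_of_subset (singleton_subset_iff.2 (hWL hw)), card_singleton, hL]
            omega
          · intro h
            have : w ∈ A := h ▸ mem_singleton_self w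
            rw [hA, mem_sdiff] at this; exact this.2 hw
          · exact not_trans u huA (by rw [hLA]; omega)
          · refine trans_of_big u hr ?_
            have : L \ ({w} ∪ A) = W \ {w} := by
              ext x
              simp only [hA, mem_sdiff, mem_union, mem_singleton, not_or]
              have := @hWL x
              tauto
            rw [this, card_sdiff_of_subset (singleton_subset_iff.2 hw), card_singleton, hWcard]
            omega
    · -- cardinality r + 1
      have h1 : ({u} : Finset α) ∉ insert A (W.image fun w => ({w} : Finset α)) := by
        simp only [mem_insert, mem_image, not_or]
        constructor
        · intro h; exact huA (h ▸ mem_singleton_self u)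
        · rintro ⟨w, hw, h⟩
          exact huW w hw (singleton_injective h.symm)
      have h2 : A ∉ W.image fun w => ({w} : Finset α) := by
        simp only [mem_image, not_exists]
        rintro w ⟨hw, h⟩
        have : w ∈ A := h ▸ mem_singleton_self w
        rw [hA, mem_sdiff] at this; exact this.2 hw
      rw [card_insert_of_notMem h1, card_insert_of_notMem h2,
        card_image_of_injective _ singleton_injective, hWcard]
      omega
  · -- upper bound
    rintro m ⟨P, hP, rfl⟩
    obtain ⟨hne, hdisj, hU, hco⟩ := hP
    have hsubL : ∀ t ∈ P, u ∉ t → t ⊆ L := by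
      intro t ht hut x hx
      have : x ∈ insert u L := hU ▸ (subset_biUnion_of_mem id ht) hx
      rcases mem_insert.1 this with rfl | h
      · exact absurd hx hut
      · exact h
    set Q := P.filter (fun p => u ∉ p) with hQ
    set F := P.filter (fun p => u ∈ p) with hF
    have hPQF : Q.card + F.card = P.card := by
      have h := Finset.card_filter_add_card_filter_not
        (s := P) (p := fun p => u ∈ p)
      rw [hQ, hF]
      omega
    have hF1 : F.card ≤ 1 := by
      rw [card_le_one]
      intro a ha b hb
      simp only [hF, mem_filter] at ha hb
      by_contra hab
      exact (Finset.disjoint_left.1 (hdisj a ha.1 b hb.1 hab)) ha.2 hb.2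
    rcases Q.eq_empty_or_nonempty with hQe | ⟨p, hp⟩
    · rw [← hPQF, hQe]; simp; omega
    have hpP : p ∈ P := (mem_filter.1 hp).1
    have hup : u ∉ p := (mem_filter.1 hp).2
    have hpL : p ⊆ L := hsubL p hpP hup
    -- p cannot be a singleton transversal
    rcases hco p hpP with ⟨v, hpv, htv⟩ | ⟨hpnt, q, hqP, hqp, hqnt, hpq⟩
    · exfalso
      refine not_trans u (hpv ▸ hup) ?_ htv
      rw [hpv] at hpL ⊢
      rw [card_sdiff_of_subset hpL, card_singleton, hL]
      omega
    have huq : u ∉ q := fun h => hqnt (trans_of_mem_u u L r h)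
    have hqL : q ⊆ L := hsubL q hqP huq
    have hcard2 : (L \ (p ∪ q)).card ≤ r - 2 := by
      by_contra h
      exact not_trans u (by simp [hup, huq]) (by omega) hpq
    set R := (Q.erase p).erase q with hR
    have hRP : ∀ t ∈ R, t ∈ P := fun t ht =>
      (mem_filter.1 (mem_of_mem_erase (mem_of_mem_erase ht))).1
    have hRsub : ∀ t ∈ R, t ⊆ L \ (p ∪ q) := by
      intro t ht x hx
      have htP := hRP t ht
      have htp : t ≠ p := ne_of_mem_erase (mem_of_mem_erase ht)
      have htq : t ≠ q := ne_of_mem_erase ht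
      have hut : u ∉ t := (mem_filter.1 (mem_of_mem_erase (mem_of_mem_erase ht))).2
      rw [mem_sdiff, mem_union]
      refine ⟨hsubL t htP hut hx, ?_⟩
      rintro (h | h)
      · exact Finset.disjoint_left.1 (hdisj t htP p hpP htp) hx h
      · exact Finset.disjoint_left.1 (hdisj t htP q hqP htq) hx h
    have hRcard : R.card ≤ r - 2 := by
      have h1 : R.card ≤ ∑ t ∈ R, t.card := by
        calc R.card = ∑ _t ∈ R, 1 := by simp
          _ ≤ ∑ t ∈ R, t.card := Finset.sum_le_sum fun t ht =>
              card_pos.2 (hne t (hRP t ht))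
      have h2 : ∑ t ∈ R, t.card = (R.biUnion id).card :=
        (Finset.card_biUnion fun a ha b hb hab => hdisj a (hRP a ha) b (hRP b hb) hab).symm
      have h3 : R.biUnion id ⊆ L \ (p ∪ q) := biUnion_subset.2 hRsub
      have := card_le_card h3
      omega
    have hQcard : Q.card ≤ R.card + 2 := by
      have hsub : Q ⊆ insert p (insert q R) := by
        intro t ht
        by_cases h1 : t = p
        · simp [h1]
        by_cases h2 : t = q
        · simp [h2]
        · exact mem_insert_of_mem (mem_insert_of_mem
            (mem_erase.2 ⟨h2, mem_erase.2 ⟨h1, ht⟩⟩))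
      calc Q.card ≤ (insert p (insert q R)).card := card_le_card hsub
        _ ≤ (insert q R).card + 1 := card_insert_le _ _
        _ ≤ R.card + 2 := by have := card_insert_le q R; omega
    omega
end

section
/- For the complete bipartite r-uniform hypergraph K_{m,n}^r with r ≥ 3, m, n > 1, and m + n = r, the transversal coalition number is C_τ(K_{m,n}^r) = r. -/
open Finset

theorem stmt10 {α : Type*} [DecidableEq α] (U1 U2 : Finset α) (m n r : ℕ)
    (hd : Disjoint U1 U2) (h1 : U1.card = m) (h2 : U2.card = n)
    (hr : 3 ≤ r) (hm : 1 < m) (hn : 1 < n) (hmn : m + n = r) :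
    TrcNumberIs (U1 ∪ U2)
      {e : Finset α | e ⊆ U1 ∪ U2 ∧ e.card = r ∧ (e ∩ U1).Nonempty ∧ (e ∩ U2).Nonempty}
      r := by
  have hU : (U1 ∪ U2).card = r := by
    rw [Finset.card_union_of_disjoint hd, h1, h2, hmn]
  -- every singleton of a vertex is a transversal
  have htrans : ∀ v ∈ U1 ∪ U2, IsTransversal
      {e : Finset α | e ⊆ U1 ∪ U2 ∧ e.card = r ∧ (e ∩ U1).Nonempty ∧ (e ∩ U2).Nonempty} {v} := by
    intro v hv e he
    obtain ⟨hsub, hcard, -, -⟩ := he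
    have heq : e = U1 ∪ U2 := Finset.eq_of_subset_of_card_le hsub (by rw [hU, hcard])
    exact ⟨v, by simp [heq, hv]⟩
  constructor
  · refine ⟨(U1 ∪ U2).image (fun v => {v}), ⟨?_, ?_, ?_, ?_⟩, ?_⟩
    · intro p hp
      simp only [Finset.mem_image] at hp
      obtain ⟨v, hv, rfl⟩ := hp
      exact ⟨v, Finset.mem_singleton_self v⟩
    · intro p hp q hq hpq
      simp only [Finset.mem_image] at hp hq
      obtain ⟨v, hv, rfl⟩ := hp
      obtain ⟨w, hw, rfl⟩ := hq
      rw [Finset.disjoint_singleton]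
      intro h; exact hpq (by rw [h])
    · ext x; simp
    · intro p hp
      simp only [Finset.mem_image] at hp
      obtain ⟨v, hv, rfl⟩ := hp
      exact Or.inl ⟨v, rfl, htrans v hv⟩
    · rw [Finset.card_image_of_injective _ (fun a b h => by simpa using h), hU]
  · rintro k ⟨P, ⟨hne, hdis, hun, -⟩, rfl⟩
    have : (U1 ∪ U2).card = ∑ p ∈ P, p.card := by
      rw [← hun]; exact Finset.card_biUnion hdis
    rw [hU] at this
    calc P.card = ∑ p ∈ P, 1 := by simp
      _ ≤ ∑ p ∈ P, p.card := Finset.sum_le_sum (fun p hp => Finset.card_pos.mpr (hne p hp))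
      _ = r := this.symm
end

section
/- For the complete bipartite r-uniform hypergraph K_{m,n}^r with r ≥ 3, m, n > 1, and m + n = r + 1, the transversal coalition number is C_τ(K_{m,n}^r) = r + 1. -/
open Finset

theorem stmt11 {α : Type*} [DecidableEq α] (U1 U2 : Finset α) (m n r : ℕ)
    (hd : Disjoint U1 U2) (h1 : U1.card = m) (h2 : U2.card = n)
    (hr : 3 ≤ r) (hm : 1 < m) (hn : 1 < n) (hmn : m + n = r + 1) :
    TrcNumberIs (U1 ∪ U2)
      {e : Finset α | e ⊆ U1 ∪ U2 ∧ e.card = r ∧ (e ∩ U1).Nonempty ∧ (e ∩ U2).Nonempty}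
      (r + 1) := by
  set E : Set (Finset α) :=
    {e : Finset α | e ⊆ U1 ∪ U2 ∧ e.card = r ∧ (e ∩ U1).Nonempty ∧ (e ∩ U2).Nonempty} with hE
  have hUcard : (U1 ∪ U2).card = r + 1 := by
    rw [Finset.card_union_of_disjoint hd, h1, h2, hmn]
  -- pairs of vertices are transversals
  have pairT : ∀ v w : α, v ∈ U1 ∪ U2 → w ∈ U1 ∪ U2 → v ≠ w →
      IsTransversal E {v, w} := by
    intro v w hv hw hvw e he
    obtain ⟨heU, hec, -, -⟩ := he
    by_contra hne
    rw [Finset.not_nonempty_iff_eq_empty] at hne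
    have hv' : v ∉ e := fun h =>
      (Finset.eq_empty_iff_forall_notMem.mp hne v)
        (Finset.mem_inter.mpr ⟨by simp, h⟩)
    have hw' : w ∉ e := fun h =>
      (Finset.eq_empty_iff_forall_notMem.mp hne w)
        (Finset.mem_inter.mpr ⟨by simp, h⟩)
    have hsub : e ⊆ (U1 ∪ U2) \ {v, w} := by
      intro x hx
      refine Finset.mem_sdiff.mpr ⟨heU hx, ?_⟩
      simp only [Finset.mem_insert, Finset.mem_singleton]
      rintro (rfl | rfl)
      · exact hv' hx
      · exact hw' hx
    have hpsub : ({v, w} : Finset α) ⊆ U1 ∪ U2 := by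
      intro x hx
      simp only [Finset.mem_insert, Finset.mem_singleton] at hx
      rcases hx with rfl | rfl <;> assumption
    have hle : e.card ≤ (U1 ∪ U2).card - 2 := by
      calc e.card ≤ ((U1 ∪ U2) \ {v, w}).card := Finset.card_le_card hsub
        _ = (U1 ∪ U2).card - ({v, w} : Finset α).card := Finset.card_sdiff_of_subset hpsub
        _ = (U1 ∪ U2).card - 2 := by rw [Finset.card_pair hvw]
    omega
  -- singletons are not transversals
  have singNT : ∀ v ∈ U1 ∪ U2, ¬ IsTransversal E {v} := by
    intro v hv hT
    have he : ((U1 ∪ U2) \ {v}) ∈ E := by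
      refine ⟨Finset.sdiff_subset, ?_, ?_, ?_⟩
      · rw [Finset.card_sdiff_of_subset (by simpa using hv), Finset.card_singleton, hUcard]
        omega
      · obtain ⟨a, ha, hav⟩ := Finset.exists_mem_ne (h1 ▸ hm) v
        exact ⟨a, Finset.mem_inter.mpr
          ⟨Finset.mem_sdiff.mpr ⟨Finset.mem_union_left _ ha, by simpa using hav⟩, ha⟩⟩
      · obtain ⟨a, ha, hav⟩ := Finset.exists_mem_ne (h2 ▸ hn) v
        exact ⟨a, Finset.mem_inter.mpr
          ⟨Finset.mem_sdiff.mpr ⟨Finset.mem_union_right _ ha, by simpa using hav⟩, ha⟩⟩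
    obtain ⟨x, hx⟩ := hT _ he
    simp only [Finset.mem_inter, Finset.mem_singleton, Finset.mem_sdiff] at hx
    exact hx.2.2 (by simp [hx.1])
  constructor
  · -- the all-singletons partition achieves r + 1
    refine ⟨(U1 ∪ U2).image (fun v => ({v} : Finset α)), ⟨?_, ?_, ?_, ?_⟩, ?_⟩
    · intro p hp
      simp only [Finset.mem_image] at hp
      obtain ⟨v, -, rfl⟩ := hp
      exact ⟨v, Finset.mem_singleton_self v⟩
    · intro p hp q hq hpq
      simp only [Finset.mem_image] at hp hq
      obtain ⟨v, -, rfl⟩ := hp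
      obtain ⟨w, -, rfl⟩ := hq
      rw [Finset.disjoint_singleton]
      exact fun h => hpq (by rw [h])
    · ext x
      simp
    · intro p hp
      simp only [Finset.mem_image] at hp
      obtain ⟨v, hv, rfl⟩ := hp
      right
      refine ⟨singNT v hv, ?_⟩
      obtain ⟨w, hw, hwv⟩ :=
        Finset.exists_mem_ne (by rw [hUcard]; omega) v
      refine ⟨{w}, Finset.mem_image.mpr ⟨w, hw, rfl⟩, ?_, singNT w hw, ?_⟩
      · intro h
        exact hwv (Finset.singleton_injective h)
      · have : ({v} ∪ {w} : Finset α) = {v, w} := rfl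
        rw [this]
        exact pairT v w hv hw (fun h => hwv h.symm)
    · rw [Finset.card_image_of_injective _ Finset.singleton_injective, hUcard]
  · -- upper bound
    rintro k ⟨P, ⟨hne, hdisj, hcov, -⟩, rfl⟩
    have key : P.card ≤ (P.biUnion id).card := by
      show P.card ≤ (P.biUnion fun p => p).card
      rw [Finset.card_biUnion hdisj]
      calc P.card = ∑ _p ∈ P, 1 := by simp
        _ ≤ ∑ p ∈ P, (id p).card :=
            Finset.sum_le_sum (fun p hp => Finset.card_pos.mpr (hne p hp))
    rw [hcov, hUcard] at key
    exact key
end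

section
/- For the complete bipartite r-uniform hypergraph K_{m,n}^r with r ≥ 3, m, n > 1, m + n > r + 1, and n = r − 1 (or symmetrically m = r − 1), the transversal coalition number is C_τ(K_{m,n}^r) = r + 1. -/
open Finset

section Key

variable {α : Type*} [DecidableEq α]

theorem key (U1 U2 : Finset α) (m n r : ℕ)
    (hd : Disjoint U1 U2) (h1 : U1.card = m) (h2 : U2.card = n)
    (hr : 3 ≤ r) (hm : 1 < m) (hn : 1 < n) (hmn : r + 1 < m + n)
    (hn' : n = r - 1) :
    TrcNumberIs (U1 ∪ U2)
      {e : Finset α | e ⊆ U1 ∪ U2 ∧ e.card = r ∧ (e ∩ U1).Nonempty ∧ (e ∩ U2).Nonempty}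
      (r + 1) := by
  set U : Finset α := U1 ∪ U2 with hU
  set E : Set (Finset α) :=
    {e : Finset α | e ⊆ U1 ∪ U2 ∧ e.card = r ∧ (e ∩ U1).Nonempty ∧ (e ∩ U2).Nonempty} with hE
  have hUcard : U.card = m + n := by
    rw [hU, card_union_of_disjoint hd, h1, h2]
  have hm3 : 3 ≤ m := by omega
  -- transversal if complement small
  have trans_small : ∀ T : Finset α, (U \ T).card < r → IsTransversal E T := by
    intro T hT e he
    obtain ⟨heU, hec, -, -⟩ := he
    by_contra hne
    rw [Finset.not_nonempty_iff_eq_empty] at hne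
    have hsub : e ⊆ U \ T := by
      intro x hx
      refine mem_sdiff.2 ⟨heU hx, fun hxT => ?_⟩
      have : x ∈ T ∩ e := mem_inter.2 ⟨hxT, hx⟩
      simp [hne] at this
    have := card_le_card hsub
    omega
  -- transversal if contains U2
  have trans_U2 : ∀ T : Finset α, U2 ⊆ T → IsTransversal E T := by
    intro T hT e he
    obtain ⟨-, -, -, ⟨y, hy⟩⟩ := he
    rw [mem_inter] at hy
    exact ⟨y, mem_inter.2 ⟨hT hy.2, hy.1⟩⟩
  have trans_U1 : ∀ T : Finset α, U1 ⊆ T → IsTransversal E T := by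
    intro T hT e he
    obtain ⟨-, -, ⟨y, hy⟩, -⟩ := he
    rw [mem_inter] at hy
    exact ⟨y, mem_inter.2 ⟨hT hy.2, hy.1⟩⟩
  -- non-transversal criterion
  have not_trans : ∀ T : Finset α, ¬ U1 ⊆ T → ¬ U2 ⊆ T → r ≤ (U \ T).card →
      ¬ IsTransversal E T := by
    intro T hT1 hT2 hTc htr
    obtain ⟨x, hx1, hxT⟩ := not_subset.1 hT1
    obtain ⟨y, hy2, hyT⟩ := not_subset.1 hT2
    have hxy : ({x, y} : Finset α) ⊆ U \ T := by
      intro z hz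
      rcases mem_insert.1 hz with rfl | hz
      · exact mem_sdiff.2 ⟨mem_union_left _ hx1, hxT⟩
      · rw [mem_singleton] at hz; subst hz
        exact mem_sdiff.2 ⟨mem_union_right _ hy2, hyT⟩
    have hxycard : ({x, y} : Finset α).card ≤ r := le_trans (card_insert_le _ _) (by simp; omega)
    obtain ⟨e, hse, heU, hecard⟩ := exists_subsuperset_card_eq hxy hxycard hTc
    have hxe : x ∈ e := hse (by simp)
    have hye : y ∈ e := hse (by simp)
    have heE : e ∈ E := by
      refine ⟨fun z hz => (mem_sdiff.1 (heU hz)).1, hecard,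
        ⟨x, mem_inter.2 ⟨hxe, hx1⟩⟩, ⟨y, mem_inter.2 ⟨hye, hy2⟩⟩⟩
    obtain ⟨z, hz⟩ := htr e heE
    rw [mem_inter] at hz
    exact (mem_sdiff.1 (heU hz.2)).2 hz.1
  -- singletons are not transversals
  have not_trans_single : ∀ v : α, ¬ IsTransversal E {v} := by
    intro v
    refine not_trans _ (fun h => ?_) (fun h => ?_) ?_
    · have hc := card_le_card h
      rw [h1, card_singleton] at hc; omega
    · have hc := card_le_card h
      rw [h2, card_singleton] at hc; omega
    · have h1' : U.card ≤ (U \ {v}).card + ({v} : Finset α).card :=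
        card_le_card_sdiff_add_card
      rw [card_singleton] at h1'; omega
  -- transversal classification
  have trans_cases : ∀ T : Finset α, IsTransversal E T →
      U2 ⊆ T ∨ (U \ T).card < r := by
    intro T hT
    by_contra h
    push_neg at h
    obtain ⟨h2', hc⟩ := h
    by_cases h1' : U1 ⊆ T
    · have hss : U1 ⊆ U ∩ T := fun x hx => mem_inter.2 ⟨mem_union_left _ hx, h1' hx⟩
      have h3 := card_le_card hss
      have h4 := card_sdiff_add_card_inter U T
      rw [h1] at h3
      omega
    · exact not_trans T h1' h2' hc hT
  constructor
  · -- existence: construction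
    obtain ⟨b, hb⟩ : U1.Nonempty := card_pos.1 (by omega)
    set A : Finset α := U1.erase b with hA
    have hAcard : A.card = m - 1 := by rw [hA, card_erase_of_mem hb, h1]
    have hAsub : A ⊆ U1 := erase_subset _ _
    have hbA : b ∉ A := notMem_erase _ _
    set P : Finset (Finset α) := insert A (insert {b} (U2.image fun v => ({v} : Finset α)))
      with hP
    have hA1 : A.Nonempty := card_pos.1 (by omega)
    -- memberships facts
    have hbU2 : b ∉ U2 := disjoint_left.1 hd hb
    have hAne_b : A ≠ {b} := fun h => hbA (h ▸ mem_singleton_self b)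
    have hAne_im : ∀ v ∈ U2, A ≠ {v} := by
      intro v hv h
      obtain ⟨a, ha⟩ := hA1
      have hav : a = v := by rw [h] at ha; exact mem_singleton.1 ha
      exact disjoint_left.1 hd (hAsub ha) (hav ▸ hv)
    have hbne_im : ∀ v ∈ U2, ({b} : Finset α) ≠ {v} := by
      intro v hv h
      have : b = v := by simpa using h
      exact hbU2 (this ▸ hv)
    have hPcard : P.card = r + 1 := by
      rw [hP, card_insert_of_notMem, card_insert_of_notMem, card_image_of_injective,
        h2]
      · omega
      · intro x y hxy; simpa using hxy
      · intro h
        obtain ⟨v, hv, hveq⟩ := mem_image.1 h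
        exact hbne_im v hv hveq.symm
      · intro h
        rcases mem_insert.1 h with h | h
        · exact hAne_b h
        · obtain ⟨v, hv, hveq⟩ := mem_image.1 h
          exact hAne_im v hv hveq.symm
    refine ⟨P, ⟨?_, ?_, ?_, ?_⟩, hPcard⟩
    · -- nonempty
      intro p hp
      rcases mem_insert.1 hp with rfl | hp
      · exact hA1
      rcases mem_insert.1 hp with rfl | hp
      · exact singleton_nonempty b
      obtain ⟨v, hv, rfl⟩ := mem_image.1 hp
      exact singleton_nonempty v
    · -- pairwise disjoint
      intro p hp q hq hpq
      have hmem : ∀ s ∈ P, s = A ∨ s = {b} ∨ ∃ v ∈ U2, s = {v} := by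
        intro s hs
        rcases mem_insert.1 hs with rfl | hs
        · exact Or.inl rfl
        rcases mem_insert.1 hs with rfl | hs
        · exact Or.inr (Or.inl rfl)
        · obtain ⟨v, hv, rfl⟩ := mem_image.1 hs
          exact Or.inr (Or.inr ⟨v, hv, rfl⟩)
      have dAb : Disjoint A ({b} : Finset α) := by
        simp [disjoint_singleton_right, hbA]
      have dAv : ∀ v ∈ U2, Disjoint A ({v} : Finset α) := by
        intro v hv
        simp only [disjoint_singleton_right]
        intro h
        exact disjoint_left.1 hd (hAsub h) hv
      have dbv : ∀ v ∈ U2, Disjoint ({b} : Finset α) ({v} : Finset α) := by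
        intro v hv
        simp only [disjoint_singleton_right, mem_singleton]
        intro h; exact hbU2 (h ▸ hv)
      rcases hmem p hp with rfl | rfl | ⟨v, hv, rfl⟩ <;>
        rcases hmem q hq with rfl | rfl | ⟨w, hw, rfl⟩
      · exact absurd rfl hpq
      · exact dAb
      · exact dAv w hw
      · exact dAb.symm
      · exact absurd rfl hpq
      · exact dbv w hw
      · exact (dAv v hv).symm
      · exact (dbv v hv).symm
      · simp only [disjoint_singleton_right, mem_singleton]
        intro h; exact hpq (by rw [h])
    · -- biUnion = U
      apply Finset.ext
      intro x
      simp only [mem_biUnion, id_eq, hP, mem_insert, mem_image, hU, mem_union]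
      constructor
      · rintro ⟨p, hp, hxp⟩
        rcases hp with rfl | rfl | ⟨v, hv, rfl⟩
        · exact Or.inl (hAsub hxp)
        · exact Or.inl (mem_singleton.1 hxp ▸ hb)
        · exact Or.inr (mem_singleton.1 hxp ▸ hv)
      · rintro (hx | hx)
        · by_cases hxb : x = b
          · exact ⟨{b}, Or.inr (Or.inl rfl), by simp [hxb]⟩
          · exact ⟨A, Or.inl rfl, mem_erase.2 ⟨hxb, hx⟩⟩
        · exact ⟨{x}, Or.inr (Or.inr ⟨x, hx, rfl⟩), mem_singleton_self x⟩
    · -- coalition structure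
      intro p hp
      have hAnt : ¬ IsTransversal E A := by
        refine not_trans A (fun h => hbA (h hb)) (fun h => ?_) ?_
        · obtain ⟨y, hy⟩ : U2.Nonempty := card_pos.1 (by omega)
          exact disjoint_left.1 hd (hAsub (h hy)) hy
        · have : U.card ≤ (U \ A).card + A.card := card_le_card_sdiff_add_card
          omega
      have hAP : A ∈ P := mem_insert_self _ _
      have hbP : ({b} : Finset α) ∈ P := mem_insert_of_mem (mem_insert_self _ _)
      rcases mem_insert.1 hp with rfl | hp'
      · -- p = A, partner {b}
        refine Or.inr ⟨hAnt, {b}, hbP, Ne.symm hAne_b, ?_, ?_⟩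
        · exact not_trans_single b
        · apply trans_U1
          intro x hx
          rw [mem_union, mem_singleton]
          by_cases h : x = b
          · exact Or.inr h
          · exact Or.inl (mem_erase.2 ⟨h, hx⟩)
      rcases mem_insert.1 hp' with rfl | hp''
      · -- p = {b}, partner A
        refine Or.inr ⟨not_trans_single b, A, hAP, hAne_b, hAnt, ?_⟩
        apply trans_U1
        intro x hx
        rw [mem_union, mem_singleton]
        by_cases h : x = b
        · exact Or.inl h
        · exact Or.inr (mem_erase.2 ⟨h, hx⟩)
      · -- p = {v}, partner A
        obtain ⟨v, hv, rfl⟩ := mem_image.1 hp''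
        refine Or.inr ⟨not_trans_single v, A, hAP, hAne_im v hv, hAnt, ?_⟩
        apply trans_small
        have hvA : v ∉ A := fun h =>
          disjoint_left.1 hd (hAsub h) hv
        have hsub : {v} ∪ A ⊆ U := by
          intro x hx
          rcases mem_union.1 hx with hx | hx
          · exact mem_union_right _ (mem_singleton.1 hx ▸ hv)
          · exact mem_union_left _ (hAsub hx)
        have hcard : ({v} ∪ A).card = m := by
          rw [card_union_of_disjoint (by simp [disjoint_singleton_left, hvA])]
          simp; omega
        have := card_sdiff_add_card_eq_card hsub
        omega
  · -- upper bound
    rintro k ⟨P, ⟨hPne, hPdisj, hPun, hPcoal⟩, rfl⟩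
    by_contra hk
    push_neg at hk
    -- parts are subsets of U
    have hpart_sub : ∀ p ∈ P, p ⊆ U := by
      intro p hp
      rw [← hPun]
      intro x hx
      exact mem_biUnion.2 ⟨p, hp, hx⟩
    -- key counting lemma
    have L1 : ∀ p ∈ P, ∀ q ∈ P, p ≠ q → (U \ (p ∪ q)).card < r → P.card ≤ r + 1 := by
      intro p hp q hq hpq hc
      set P' : Finset (Finset α) := (P.erase p).erase q with hP'
      have hP'sub : P' ⊆ P := (erase_subset _ _).trans (erase_subset _ _)
      have hP'card : P'.card = P.card - 2 := by
        rw [hP', card_erase_of_mem (mem_erase.2 ⟨Ne.symm hpq, hq⟩), card_erase_of_mem hp]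
        omega
      have hbsub : P'.biUnion id ⊆ U \ (p ∪ q) := by
        intro x hx
        obtain ⟨s, hs, hxs⟩ := mem_biUnion.1 hx
        have hsP : s ∈ P := hP'sub hs
        have hsp : s ≠ p := fun h => (notMem_erase p _ ) (h ▸ (mem_of_mem_erase hs))
        have hsq : s ≠ q := fun h => (notMem_erase q _) (h ▸ hs)
        refine mem_sdiff.2 ⟨hpart_sub s hsP hxs, fun hxpq => ?_⟩
        rcases mem_union.1 hxpq with hxp | hxq
        · exact disjoint_left.1 (hPdisj s hsP p hp hsp) hxs hxp
        · exact disjoint_left.1 (hPdisj s hsP q hq hsq) hxs hxq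
      have hcards : P'.card ≤ (P'.biUnion id).card := by
        apply card_le_card_biUnion
        · intro x hx y hy hxy
          exact hPdisj x (hP'sub hx) y (hP'sub hy) hxy
        · intro s hs
          exact hPne s (hP'sub hs)
      have := card_le_card hbsub
      have hcard2 : 2 ≤ P.card := by
        have : ({p, q} : Finset (Finset α)) ⊆ P := by
          intro s hs
          rcases mem_insert.1 hs with rfl | hs
          · exact hp
          · exact (mem_singleton.1 hs) ▸ hq
        have h2c := card_le_card this
        rw [card_insert_of_notMem (by simp [hpq]), card_singleton] at h2c
        exact h2c
      omega
    -- no singleton transversals; so every part has a coalition partner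
    have hcoal : ∀ p ∈ P, ¬ IsTransversal E p ∧
        ∃ q ∈ P, q ≠ p ∧ ¬ IsTransversal E q ∧ IsTransversal E (p ∪ q) := by
      intro p hp
      rcases hPcoal p hp with ⟨v, rfl, htr⟩ | h
      · exact absurd htr (not_trans_single v)
      · exact h
    -- pick a part
    have hPcard3 : 3 ≤ P.card := by omega
    obtain ⟨p0, hp0⟩ : P.Nonempty := card_pos.1 (by omega)
    obtain ⟨-, q0, hq0, hq0ne, -, htr0⟩ := hcoal p0 hp0
    rcases trans_cases _ htr0 with hU2 | hsmall
    · -- U2 ⊆ p0 ∪ q0 : find third part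
      have : 1 ≤ ((P.erase p0).erase q0).card := by
        rw [card_erase_of_mem (mem_erase.2 ⟨hq0ne, hq0⟩), card_erase_of_mem hp0]
        omega
      obtain ⟨p1, hp1⟩ : ((P.erase p0).erase q0).Nonempty := card_pos.1 this
      have hp1P : p1 ∈ P := mem_of_mem_erase (mem_of_mem_erase hp1)
      have hp1q0 : p1 ≠ q0 := ne_of_mem_erase hp1
      have hp1p0 : p1 ≠ p0 := ne_of_mem_erase (mem_of_mem_erase hp1)
      -- p1 ⊆ U1
      have hp1U1 : p1 ⊆ U1 := by
        intro x hx
        have hxU : x ∈ U := hpart_sub p1 hp1P hx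
        rcases mem_union.1 hxU with h | h
        · exact h
        · exfalso
          rcases mem_union.1 (hU2 h) with h' | h'
          · exact disjoint_left.1 (hPdisj p1 hp1P p0 hp0 hp1p0) hx h'
          · exact disjoint_left.1 (hPdisj p1 hp1P q0 hq0 hp1q0) hx h'
      obtain ⟨-, q1, hq1, hq1ne, hq1nt, htr1⟩ := hcoal p1 hp1P
      rcases trans_cases _ htr1 with hU2' | hsmall'
      · -- U2 ⊆ p1 ∪ q1 forces U2 ⊆ q1, so q1 transversal: contradiction
        apply hq1nt
        apply trans_U2
        intro y hy
        rcases mem_union.1 (hU2' hy) with h | h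
        · exact absurd (hp1U1 h) (fun h' => disjoint_left.1 hd h' hy)
        · exact h
      · have := L1 p1 hp1P q1 hq1 (Ne.symm hq1ne) hsmall'; omega
    · have := L1 p0 hp0 q0 hq0 (Ne.symm hq0ne) hsmall; omega

end Key

theorem stmt12 {α : Type*} [DecidableEq α] (U1 U2 : Finset α) (m n r : ℕ)
    (hd : Disjoint U1 U2) (h1 : U1.card = m) (h2 : U2.card = n)
    (hr : 3 ≤ r) (hm : 1 < m) (hn : 1 < n) (hmn : r + 1 < m + n)
    (hcase : n = r - 1 ∨ m = r - 1) :
    TrcNumberIs (U1 ∪ U2)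
      {e : Finset α | e ⊆ U1 ∪ U2 ∧ e.card = r ∧ (e ∩ U1).Nonempty ∧ (e ∩ U2).Nonempty}
      (r + 1) := by
  rcases hcase with h | h
  · exact key U1 U2 m n r hd h1 h2 hr hm hn hmn h
  · have h' := key U2 U1 n m r hd.symm h2 h1 hr hn hm (by omega) h
    have hUeq : U2 ∪ U1 = U1 ∪ U2 := union_comm _ _
    rw [hUeq] at h'
    have hEeq : {e : Finset α | e ⊆ U1 ∪ U2 ∧ e.card = r ∧ (e ∩ U2).Nonempty ∧ (e ∩ U1).Nonempty}
        = {e : Finset α | e ⊆ U1 ∪ U2 ∧ e.card = r ∧ (e ∩ U1).Nonempty ∧ (e ∩ U2).Nonempty} := by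
      ext e
      simp only [Set.mem_setOf_eq]
      tauto
    rw [hEeq] at h'
    exact h'
end

section
/- For the complete r-partite r-uniform hypergraph K^r_{n_1,...,n_r}, the transversal coalition number satisfies r ≤ C_τ(K^r_{n_1,...,n_r}) ≤ 2r. -/
open Finset

section Aux
variable {α : Type*} [DecidableEq α] {r : ℕ}

lemma trans_iff (parts : Fin r → Finset α) (hne : ∀ i, (parts i).Nonempty) (T : Finset α) :
    IsTransversal {e : Finset α | ∃ f : Fin r → α, (∀ i, f i ∈ parts i) ∧
      e = Finset.image f Finset.univ} T ↔ ∃ i, parts i ⊆ T := by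
  constructor
  · intro h
    by_contra hc
    push_neg at hc
    have h2 : ∀ i, ∃ x, x ∈ parts i ∧ x ∉ T := by
      intro i
      obtain ⟨x, hx, hx'⟩ := Finset.not_subset.mp (hc i)
      exact ⟨x, hx, hx'⟩
    choose f hf hf' using h2
    obtain ⟨y, hy⟩ := h (Finset.image f Finset.univ) ⟨f, hf, rfl⟩
    rw [Finset.mem_inter, Finset.mem_image] at hy
    obtain ⟨hyT, i, -, rfl⟩ := hy
    exact hf' i hyT
  · rintro ⟨i, hi⟩ e ⟨f, hf, rfl⟩
    exact ⟨f i, Finset.mem_inter.mpr ⟨hi (hf i),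
      Finset.mem_image.mpr ⟨i, Finset.mem_univ i, rfl⟩⟩⟩

lemma trc_ub (parts : Fin r → Finset α)
    (hdisj : ∀ i j, i ≠ j → Disjoint (parts i) (parts j))
    (hne : ∀ i, (parts i).Nonempty) (P : Finset (Finset α))
    (hP : IsTrcPartition (Finset.univ.biUnion parts)
      {e : Finset α | ∃ f : Fin r → α, (∀ i, f i ∈ parts i) ∧
        e = Finset.image f Finset.univ} P) : P.card ≤ 2 * r := by
  obtain ⟨hne', hdisj', hcover, hcond⟩ := hP
  set E : Set (Finset α) := {e : Finset α | ∃ f : Fin r → α, (∀ i, f i ∈ parts i) ∧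
        e = Finset.image f Finset.univ} with hE
  have key : ∀ p ∈ P, ∃ i, (p ∩ parts i).Nonempty ∧ ∃ q ∈ P, parts i ⊆ p ∪ q := by
    intro p hp
    rcases hcond p hp with ⟨v, rfl, htr⟩ | ⟨hntr, q, hq, hqp, hqntr, htr⟩
    · obtain ⟨i, hi⟩ := (trans_iff parts hne _).mp htr
      obtain ⟨x, hx⟩ := hne i
      exact ⟨i, ⟨x, Finset.mem_inter.mpr ⟨hi hx, hx⟩⟩, {v}, hp, by simp [hi]⟩
    · obtain ⟨i, hi⟩ := (trans_iff parts hne _).mp htr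
      have hnq : ¬ parts i ⊆ q := fun h => hqntr ((trans_iff parts hne _).mpr ⟨i, h⟩)
      obtain ⟨x, hx, hx'⟩ := Finset.not_subset.mp hnq
      have hxp : x ∈ p := by
        rcases Finset.mem_union.mp (hi hx) with h | h
        · exact h
        · exact absurd h hx'
      exact ⟨i, ⟨x, Finset.mem_inter.mpr ⟨hxp, hx⟩⟩, q, hq, hi⟩
  rcases P.eq_empty_or_nonempty with rfl | ⟨p0, hp0⟩
  · simp
  have : Nonempty (Fin r) := ⟨(key p0 hp0).choose⟩
  classical
  set f : Finset α → Fin r := fun p =>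
    if h : ∃ i, (p ∩ parts i).Nonempty ∧ ∃ q ∈ P, parts i ⊆ p ∪ q then h.choose
    else Classical.arbitrary _ with hfdef
  have hf : ∀ p ∈ P, (p ∩ parts (f p)).Nonempty ∧ ∃ q ∈ P, parts (f p) ⊆ p ∪ q := by
    intro p hp
    have h := key p hp
    simp only [hfdef, dif_pos h]
    exact h.choose_spec
  have hfib : ∀ i ∈ (Finset.univ : Finset (Fin r)), ({p ∈ P | f p = i}).card ≤ 2 := by
    intro i _
    by_contra h
    push_neg at h
    obtain ⟨a, b, c, ha, hb, hc, hab, hac, hbc⟩ := Finset.two_lt_card_iff.mp h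
    rw [Finset.mem_filter] at ha hb hc
    obtain ⟨haP, hai⟩ := ha; obtain ⟨hbP, hbi⟩ := hb; obtain ⟨hcP, hci⟩ := hc
    obtain ⟨-, q, hqP, hsub⟩ := hf a haP
    rw [hai] at hsub
    have mem2 : ∀ d ∈ P, d ≠ a → (d ∩ parts i).Nonempty → d = q := by
      intro d hd hda ⟨x, hx⟩
      rw [Finset.mem_inter] at hx
      have hxaq : x ∈ a ∪ q := hsub hx.2
      rcases Finset.mem_union.mp hxaq with h' | h'
      · exact absurd (Finset.disjoint_left.mp (hdisj' d hd a haP hda) hx.1) (by simp [h'])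
      · by_contra hdq
        exact Finset.disjoint_left.mp (hdisj' d hd q hqP hdq) hx.1 h'
    have hb' : b = q := mem2 b hbP (Ne.symm hab) (by rw [← hbi] at *; exact (hf b hbP).1 |>.mono (by rw [hbi]))
    have hc' : c = q := mem2 c hcP (Ne.symm hac) (by rw [← hci] at *; exact (hf c hcP).1 |>.mono (by rw [hci]))
    exact hbc (hb'.trans hc'.symm)
  calc P.card ≤ 2 * (Finset.univ : Finset (Fin r)).card :=
        Finset.card_le_mul_card_image_of_maps_to (fun p _ => Finset.mem_univ (f p)) 2 hfib
    _ = 2 * r := by simp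

lemma trc_lb (parts : Fin r → Finset α)
    (hdisj : ∀ i j, i ≠ j → Disjoint (parts i) (parts j))
    (hne : ∀ i, (parts i).Nonempty) :
    ∃ P : Finset (Finset α), IsTrcPartition (Finset.univ.biUnion parts)
      {e : Finset α | ∃ f : Fin r → α, (∀ i, f i ∈ parts i) ∧
        e = Finset.image f Finset.univ} P ∧ r ≤ P.card := by
  classical
  set E : Set (Finset α) := {e : Finset α | ∃ f : Fin r → α, (∀ i, f i ∈ parts i) ∧
        e = Finset.image f Finset.univ} with hE
  set x : Fin r → α := fun i => (hne i).choose with hxdef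
  have hx : ∀ i, x i ∈ parts i := fun i => (hne i).choose_spec
  set block : Fin r → Finset (Finset α) := fun i =>
    if parts i = {x i} then {parts i} else {{x i}, parts i \ {x i}} with hbdef
  set P : Finset (Finset α) := Finset.univ.biUnion block with hPdef
  have hblock_sub : ∀ i, ∀ p ∈ block i, p ⊆ parts i := by
    intro i p hp
    simp only [hbdef] at hp
    split_ifs at hp with h
    · simp only [Finset.mem_singleton] at hp; subst hp; exact subset_rfl
    · rcases Finset.mem_insert.mp hp with rfl | hp
      · exact Finset.singleton_subset_iff.mpr (hx i)
      · rw [Finset.mem_singleton] at hp; subst hp; exact Finset.sdiff_subset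
  have hblock_ne : ∀ i, ∀ p ∈ block i, p.Nonempty := by
    intro i p hp
    simp only [hbdef] at hp
    split_ifs at hp with h
    · simp only [Finset.mem_singleton] at hp; subst hp; exact hne i
    · rcases Finset.mem_insert.mp hp with rfl | hp
      · exact ⟨x i, Finset.mem_singleton_self _⟩
      · rw [Finset.mem_singleton] at hp; subst hp
        obtain ⟨y, hy, hy'⟩ := Finset.not_subset.mp (fun hs => h (Finset.Subset.antisymm hs
          (Finset.singleton_subset_iff.mpr (hx i))))
        exact ⟨y, Finset.mem_sdiff.mpr ⟨hy, hy'⟩⟩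
  have hmemP : ∀ p, p ∈ P ↔ ∃ i, p ∈ block i := by
    intro p; simp [hPdef]
  have hntr_sub : ∀ i, ∀ p, p ⊆ parts i → (parts i \ p).Nonempty → ¬ IsTransversal E p := by
    intro i p hpsub hmiss htr
    obtain ⟨j, hj⟩ := (trans_iff parts hne _).mp htr
    obtain ⟨y, hy⟩ := hmiss
    rw [Finset.mem_sdiff] at hy
    by_cases hij : j = i
    · subst hij
      obtain ⟨z, hz⟩ := hne j
      exact hy.2 (by exact hj hy.1)
    · obtain ⟨z, hz⟩ := hne j
      exact Finset.disjoint_left.mp (hdisj j i hij) hz (hpsub (hj hz))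
  refine ⟨P, ⟨?_, ?_, ?_, ?_⟩, ?_⟩
  · intro p hp
    obtain ⟨i, hi⟩ := (hmemP p).mp hp
    exact hblock_ne i p hi
  · intro p hp q hq hpq
    obtain ⟨i, hi⟩ := (hmemP p).mp hp
    obtain ⟨j, hj⟩ := (hmemP q).mp hq
    by_cases hij : i = j
    · subst hij
      simp only [hbdef] at hi hj
      split_ifs at hi hj with h
      · simp only [Finset.mem_singleton] at hi hj; exact absurd (hi.trans hj.symm) hpq
      · rcases Finset.mem_insert.mp hi with rfl | hi <;>
          rcases Finset.mem_insert.mp hj with rfl | hj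
        · exact absurd rfl hpq
        · rw [Finset.mem_singleton] at hj; subst hj
          simp [Finset.disjoint_left]
        · rw [Finset.mem_singleton] at hi; subst hi
          simp [Finset.disjoint_right]
        · rw [Finset.mem_singleton] at hi hj; subst hi; subst hj; exact absurd rfl hpq
    · exact Finset.disjoint_of_subset_left (hblock_sub i p hi)
        (Finset.disjoint_of_subset_right (hblock_sub j q hj) (hdisj i j hij))
  · ext a
    simp only [Finset.mem_biUnion, id, Finset.mem_univ, true_and]
    constructor
    · rintro ⟨p, hp, hap⟩
      obtain ⟨i, hi⟩ := (hmemP p).mp hp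
      exact ⟨i, hblock_sub i p hi hap⟩
    · rintro ⟨i, hai⟩
      by_cases h : parts i = {x i}
      · exact ⟨parts i, (hmemP _).mpr ⟨i, by simp [hbdef, h]⟩, hai⟩
      · by_cases hax : a = x i
        · exact ⟨{x i}, (hmemP _).mpr ⟨i, by simp [hbdef, h]⟩, by simp [hax]⟩
        · exact ⟨parts i \ {x i}, (hmemP _).mpr ⟨i, by simp [hbdef, h]⟩,
            Finset.mem_sdiff.mpr ⟨hai, by simp [hax]⟩⟩
  · intro p hp
    obtain ⟨i, hi⟩ := (hmemP p).mp hp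
    simp only [hbdef] at hi
    split_ifs at hi with h
    · simp only [Finset.mem_singleton] at hi; subst hi
      exact Or.inl ⟨x i, h, (trans_iff parts hne _).mpr ⟨i, by rw [h]⟩⟩
    · have hxne : ({x i} : Finset α) ≠ parts i \ {x i} := by
        intro heq
        have : x i ∈ parts i \ {x i} := heq ▸ Finset.mem_singleton_self _
        simp at this
      have hmiss1 : (parts i \ ({x i} : Finset α)).Nonempty := by
        obtain ⟨y, hy, hy'⟩ := Finset.not_subset.mp (fun hs => h (Finset.Subset.antisymm hs
          (Finset.singleton_subset_iff.mpr (hx i))))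
        exact ⟨y, Finset.mem_sdiff.mpr ⟨hy, hy'⟩⟩
      have hmiss2 : (parts i \ (parts i \ ({x i} : Finset α))).Nonempty := by
        refine ⟨x i, Finset.mem_sdiff.mpr ⟨hx i, by simp⟩⟩
      have hunion : ({x i} : Finset α) ∪ (parts i \ {x i}) = parts i := by
        rw [Finset.union_sdiff_of_subset (Finset.singleton_subset_iff.mpr (hx i))]
      have htr : IsTransversal E (({x i} : Finset α) ∪ (parts i \ {x i})) :=
        (trans_iff parts hne _).mpr ⟨i, by rw [hunion]⟩
      have hmem1 : ({x i} : Finset α) ∈ P := (hmemP _).mpr ⟨i, by simp [hbdef, h]⟩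
      have hmem2 : parts i \ ({x i} : Finset α) ∈ P := (hmemP _).mpr ⟨i, by simp [hbdef, h]⟩
      rcases Finset.mem_insert.mp hi with rfl | hi
      · exact Or.inr ⟨hntr_sub i _ (Finset.singleton_subset_iff.mpr (hx i)) hmiss1,
          parts i \ {x i}, hmem2, hxne.symm,
          hntr_sub i _ Finset.sdiff_subset hmiss2, htr⟩
      · rw [Finset.mem_singleton] at hi; subst hi
        refine Or.inr ⟨hntr_sub i _ Finset.sdiff_subset hmiss2,
          {x i}, hmem1, hxne, hntr_sub i _ (Finset.singleton_subset_iff.mpr (hx i)) hmiss1, ?_⟩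
        rw [Finset.union_comm]
        exact htr
  · set g : Fin r → Finset α := fun i => if parts i = {x i} then parts i else {x i} with hgdef
    have hgP : ∀ i, g i ∈ P := by
      intro i
      refine (hmemP _).mpr ⟨i, ?_⟩
      simp only [hgdef, hbdef]
      split_ifs with h <;> simp
    have hgx : ∀ i, x i ∈ g i := by
      intro i
      simp only [hgdef]
      split_ifs with h
      · exact hx i
      · exact Finset.mem_singleton_self _
    have hginj : Function.Injective g := by
      intro i j hij
      by_contra hne'
      have h1 : x i ∈ parts j := by
        have := hgx i
        rw [hij] at this
        have hsub : g j ⊆ parts j := by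
          simp only [hgdef]; split_ifs with h
          · exact subset_rfl
          · exact Finset.singleton_subset_iff.mpr (hx j)
        exact hsub this
      exact Finset.disjoint_left.mp (hdisj i j hne') (hx i) h1
    calc r = (Finset.univ.image g).card := by
          rw [Finset.card_image_of_injective _ hginj, Finset.card_univ, Fintype.card_fin]
      _ ≤ P.card := Finset.card_le_card (fun p hp => by
          obtain ⟨i, -, rfl⟩ := Finset.mem_image.mp hp
          exact hgP i)
end Aux

theorem stmt13 {α : Type*} [DecidableEq α] (r : ℕ) (parts : Fin r → Finset α)
    (hdisj : ∀ i j, i ≠ j → Disjoint (parts i) (parts j))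
    (hne : ∀ i, (parts i).Nonempty) :
    ∃ k, TrcNumberIs (Finset.univ.biUnion parts)
        {e : Finset α | ∃ f : Fin r → α, (∀ i, f i ∈ parts i) ∧
          e = Finset.image f Finset.univ} k ∧
      r ≤ k ∧ k ≤ 2 * r := by
  set S : Set ℕ := {m | ∃ P : Finset (Finset α), IsTrcPartition (Finset.univ.biUnion parts)
      {e : Finset α | ∃ f : Fin r → α, (∀ i, f i ∈ parts i) ∧
        e = Finset.image f Finset.univ} P ∧ P.card = m} with hSdef
  obtain ⟨P0, hP0, hP0card⟩ := trc_lb parts hdisj hne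
  have hSne : S.Nonempty := ⟨P0.card, P0, hP0, rfl⟩
  have hSub : ∀ m ∈ S, m ≤ 2 * r := by
    rintro m ⟨P, hP, rfl⟩
    exact trc_ub parts hdisj hne P hP
  have hbdd : BddAbove S := ⟨2 * r, hSub⟩
  refine ⟨sSup S, ⟨Nat.sSup_mem hSne hbdd, fun m hm => le_csSup hbdd hm⟩,
    le_trans hP0card (le_csSup hbdd ⟨P0, hP0, rfl⟩), csSup_le hSne hSub⟩
end

section
/- For the complete r-partite r-uniform hypergraph K^r_{n_1,...,n_r} in which every part has size at least 2, the transversal coalition number equals 2r. -/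
open Finset

theorem stmt14 {α : Type*} [DecidableEq α] (r : ℕ) (parts : Fin r → Finset α)
    (hdisj : ∀ i j, i ≠ j → Disjoint (parts i) (parts j))
    (hcard : ∀ i, 2 ≤ (parts i).card) :
    TrcNumberIs (Finset.univ.biUnion parts)
      {e : Finset α | ∃ f : Fin r → α, (∀ i, f i ∈ parts i) ∧
        e = Finset.image f Finset.univ} (2 * r) := by
  classical
  set E : Set (Finset α) := {e : Finset α | ∃ f : Fin r → α, (∀ i, f i ∈ parts i) ∧
        e = Finset.image f Finset.univ} with hE
  -- characterization of transversals
  have htr : ∀ T : Finset α, IsTransversal E T ↔ ∃ i, parts i ⊆ T := by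
    intro T
    constructor
    · intro h
      by_contra hc
      push_neg at hc
      have hchoice : ∀ i, ∃ x, x ∈ parts i ∧ x ∉ T := by
        intro i
        obtain ⟨x, hx, hxT⟩ := Finset.not_subset.mp (hc i)
        exact ⟨x, hx, hxT⟩
      choose f hf1 hf2 using hchoice
      have he : Finset.image f Finset.univ ∈ E := ⟨f, hf1, rfl⟩
      obtain ⟨x, hx⟩ := h _ he
      rw [Finset.mem_inter, Finset.mem_image] at hx
      obtain ⟨hxT, i, -, rfl⟩ := hx
      exact hf2 i hxT
    · rintro ⟨i, hi⟩ e ⟨f, hf, rfl⟩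
      exact ⟨f i, Finset.mem_inter.mpr ⟨hi (hf i),
        Finset.mem_image_of_mem f (Finset.mem_univ i)⟩⟩
  have hne : ∀ i, (parts i).Nonempty := fun i => Finset.card_pos.mp (by have := hcard i; omega)
  constructor
  · -- membership: construct a partition with 2r parts
    obtain ⟨u, hu⟩ := Classical.axiomOfChoice hne
    have pair_ne : ∀ i, ({u i} : Finset α) ≠ parts i \ {u i} := by
      intro i h
      have : u i ∈ parts i \ {u i} := h ▸ Finset.mem_singleton_self (u i)
      simp at this
    have sdiff_ne : ∀ i, (parts i \ {u i}).Nonempty := by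
      intro i
      rw [← Finset.erase_eq]
      apply Finset.card_pos.mp
      rw [Finset.card_erase_of_mem (hu i)]
      have := hcard i; omega
    have sdiff_sub : ∀ i, parts i \ {u i} ⊆ parts i := fun i => Finset.sdiff_subset
    have sing_sub : ∀ i, ({u i} : Finset α) ⊆ parts i := by
      intro i x hx; rw [Finset.mem_singleton] at hx; exact hx ▸ hu i
    have hunion_pair : ∀ i, ({u i} : Finset α) ∪ (parts i \ {u i}) = parts i := by
      intro i
      rw [← Finset.erase_eq, ← Finset.insert_eq, Finset.insert_erase (hu i)]
    set Q : Finset (Finset α) :=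
      Finset.univ.biUnion (fun i => {{u i}, parts i \ {u i}}) with hQ
    have hQmem : ∀ p, p ∈ Q ↔ ∃ i, p = {u i} ∨ p = parts i \ {u i} := by
      intro p; simp [hQ]
    -- every element of Q is a nonempty subset of some parts i
    have hQsub : ∀ p ∈ Q, ∃ i, p.Nonempty ∧ p ⊆ parts i := by
      intro p hp
      obtain ⟨i, h | h⟩ := (hQmem p).mp hp
      · exact ⟨i, h ▸ ⟨Finset.singleton_nonempty _, sing_sub i⟩⟩
      · exact ⟨i, h ▸ ⟨sdiff_ne i, sdiff_sub i⟩⟩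
    -- no element of Q is a transversal
    have hQnt : ∀ p ∈ Q, ¬ IsTransversal E p := by
      intro p hp ht
      obtain ⟨j, hj⟩ := (htr p).mp ht
      obtain ⟨i, h | h⟩ := (hQmem p).mp hp
      · subst h
        have := Finset.card_le_card hj
        simp at this
        have := hcard j; omega
      · subst h
        by_cases hij : j = i
        · subst hij
          have : u j ∈ parts j \ {u j} := hj (hu j)
          simp at this
        · have hd := hdisj j i hij
          have hsub : parts j ⊆ parts i := hj.trans (sdiff_sub i)
          have := hd.eq_bot_of_le hsub
          obtain ⟨x, hx⟩ := hne j
          rw [this] at hx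
          simp at hx
    refine ⟨Q, ⟨?_, ?_, ?_, ?_⟩, ?_⟩
    · intro p hp; exact ((hQsub p hp).choose_spec).1
    · intro p hp q hq hpq
      obtain ⟨i, hi⟩ := (hQmem p).mp hp
      obtain ⟨j, hj⟩ := (hQmem q).mp hq
      by_cases hij : i = j
      · subst hij
        rcases hi with hi | hi <;> rcases hj with hj | hj
        · exact absurd (hi.trans hj.symm) hpq
        · subst hi; subst hj; exact Finset.disjoint_sdiff
        · subst hi; subst hj; exact Finset.sdiff_disjoint
        · exact absurd (hi.trans hj.symm) hpq
      · have hpi : p ⊆ parts i := by rcases hi with h | h <;> exact h ▸ (by first | exact sing_sub i | exact sdiff_sub i)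
        have hqj : q ⊆ parts j := by rcases hj with h | h <;> exact h ▸ (by first | exact sing_sub j | exact sdiff_sub j)
        exact Finset.disjoint_of_subset_left hpi (Finset.disjoint_of_subset_right hqj (hdisj i j hij))
    · ext x
      simp only [Finset.mem_biUnion, Finset.mem_univ, true_and, id]
      constructor
      · rintro ⟨p, hp, hxp⟩
        obtain ⟨i, -, hsub⟩ := hQsub p hp
        exact ⟨i, hsub hxp⟩
      · rintro ⟨i, hxi⟩
        by_cases hx : x = u i
        · exact ⟨{u i}, (hQmem _).mpr ⟨i, Or.inl rfl⟩, by simp [hx]⟩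
        · exact ⟨parts i \ {u i}, (hQmem _).mpr ⟨i, Or.inr rfl⟩,
            Finset.mem_sdiff.mpr ⟨hxi, by simp [hx]⟩⟩
    · intro p hp
      right
      refine ⟨hQnt p hp, ?_⟩
      obtain ⟨i, hi⟩ := (hQmem p).mp hp
      rcases hi with hi | hi
      · subst hi
        refine ⟨parts i \ {u i}, (hQmem _).mpr ⟨i, Or.inr rfl⟩, (pair_ne i).symm, ?_, ?_⟩
        · exact hQnt _ ((hQmem _).mpr ⟨i, Or.inr rfl⟩)
        · rw [htr]; exact ⟨i, by rw [hunion_pair i]⟩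
      · refine ⟨{u i}, (hQmem _).mpr ⟨i, Or.inl rfl⟩, ?_, ?_, ?_⟩
        · rw [hi]; exact pair_ne i
        · exact hQnt _ ((hQmem _).mpr ⟨i, Or.inl rfl⟩)
        · rw [htr]; refine ⟨i, ?_⟩
          rw [hi, Finset.union_comm, hunion_pair i]
    · rw [hQ, Finset.card_biUnion]
      · have : ∀ i : Fin r, ({({u i} : Finset α), parts i \ {u i}} : Finset (Finset α)).card = 2 := by
          intro i
          rw [Finset.card_insert_of_notMem (by simp [pair_ne i]), Finset.card_singleton]
        rw [Finset.sum_congr rfl (fun i _ => this i)]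
        simp [mul_comm]
      · intro i _ j _ hij
        simp only [Function.onFun]; rw [Finset.disjoint_left]
        intro p hpi hpj
        have hpi' : p.Nonempty ∧ p ⊆ parts i := by
          simp only [Finset.mem_insert, Finset.mem_singleton] at hpi
          rcases hpi with h | h
          · exact h ▸ ⟨Finset.singleton_nonempty _, sing_sub i⟩
          · exact h ▸ ⟨sdiff_ne i, sdiff_sub i⟩
        have hpj' : p ⊆ parts j := by
          simp only [Finset.mem_insert, Finset.mem_singleton] at hpj
          rcases hpj with h | h
          · exact h ▸ sing_sub j
          · exact h ▸ sdiff_sub j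
        obtain ⟨x, hx⟩ := hpi'.1
        exact Finset.disjoint_left.mp (hdisj i j hij) (hpi'.2 hx) (hpj' hx)
  · -- upper bound
    rintro m ⟨P, ⟨hPne, hPdisj, hPunion, hPprop⟩, rfl⟩
    -- every part of P is non-transversal with a partner
    have hnontr : ∀ p ∈ P, ¬ IsTransversal E p ∧
        ∃ q ∈ P, q ≠ p ∧ IsTransversal E (p ∪ q) := by
      intro p hp
      rcases hPprop p hp with ⟨v, rfl, htv⟩ | ⟨h1, q, hq, hq1, _, hq3⟩
      · exfalso
        obtain ⟨j, hj⟩ := (htr _).mp htv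
        have := Finset.card_le_card hj
        simp at this
        have := hcard j; omega
      · exact ⟨h1, q, hq, hq1, hq3⟩
    set S : Fin r → Finset (Finset α) :=
      fun i => P.filter (fun p => ∃ q ∈ P, q ≠ p ∧ parts i ⊆ p ∪ q) with hS
    have hcover : P ⊆ Finset.univ.biUnion S := by
      intro p hp
      obtain ⟨-, q, hqP, hqne, hqt⟩ := hnontr p hp
      obtain ⟨i, hi⟩ := (htr _).mp hqt
      exact Finset.mem_biUnion.mpr ⟨i, Finset.mem_univ i,
        Finset.mem_filter.mpr ⟨hp, q, hqP, hqne, hi⟩⟩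
    have hSle : ∀ i, (S i).card ≤ 2 := by
      intro i
      by_cases hSne : (S i).Nonempty
      · obtain ⟨p0, hp0⟩ := hSne
        obtain ⟨hp0P, q0, hq0P, hq0ne, hsub0⟩ := Finset.mem_filter.mp hp0
        have hsubset : S i ⊆ {p0, q0} := by
          intro p' hp'
          obtain ⟨hp'P, q', hq'P, hq'ne, hsub'⟩ := Finset.mem_filter.mp hp'
          -- p' intersects parts i
          have hq'nt := (hnontr q' hq'P).1
          rw [htr] at hq'nt
          push_neg at hq'nt
          obtain ⟨x, hxi, hxq'⟩ := Finset.not_subset.mp (hq'nt i)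
          have hxp' : x ∈ p' := by
            have := hsub' hxi
            rw [Finset.mem_union] at this
            tauto
          by_contra hcon
          simp only [Finset.mem_insert, Finset.mem_singleton, not_or] at hcon
          have hx0 := hsub0 hxi
          rw [Finset.mem_union] at hx0
          rcases hx0 with h | h
          · exact Finset.disjoint_left.mp (hPdisj p' hp'P p0 hp0P hcon.1) hxp' h
          · exact Finset.disjoint_left.mp (hPdisj p' hp'P q0 hq0P hcon.2) hxp' h
        calc (S i).card ≤ ({p0, q0} : Finset (Finset α)).card := Finset.card_le_card hsubset
          _ ≤ 2 := by
            refine le_trans (Finset.card_insert_le _ _) ?_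
            simp
      · rw [Finset.not_nonempty_iff_eq_empty] at hSne
        simp [hSne]
    calc P.card ≤ (Finset.univ.biUnion S).card := Finset.card_le_card hcover
      _ ≤ ∑ i, (S i).card := Finset.card_biUnion_le
      _ ≤ ∑ _i : Fin r, 2 := Finset.sum_le_sum (fun i _ => hSle i)
      _ = 2 * r := by simp [mul_comm]
end
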